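/- arXiv:2204.02343 — 3 statements merged into one kernel-verified Lean document; each statement's English description precedes it below -/
import Mathlib

section
/- Assume μ, σ : ℝ → ℝ satisfy conditions (A1)–(A4) with parameters p₀, p₁ ∈ [2,∞), ℓ_μ ∈ (0,∞), ℓ_σ ∈ [0, ℓ_μ/2], and let μ̃, σ̃ : ℝ → ℝ be the transformed coefficients defined via the function G. Then μ̃ and σ̃ are continuous on ℝ. -/
/-- For `ξ₁ < … < ξ_k` and `i ∈ {0,…,k}`, `piece k ξ i` is the open interval
`(ξ_i, ξ_{i+1})` of the partition of `ℝ`, with the conventions `ξ₀ = -∞`, `ξ_{k+1} = ∞`. -/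
def piece (k : ℕ) (ξ : Fin k → ℝ) (i : Fin (k + 1)) : Set ℝ :=
  {x : ℝ | (∀ j : Fin k, (j : ℕ) < (i : ℕ) → ξ j < x) ∧
    ∀ j : Fin k, (i : ℕ) ≤ (j : ℕ) → x < ξ j}

/-- The bump function `φ(x) = (1 - x²)⁴ · 1_{[-1,1]}(x)`. -/
noncomputable def phi (x : ℝ) : ℝ := if x ∈ Set.Icc (-1 : ℝ) 1 then (1 - x ^ 2) ^ 4 else 0

/-- The transformation `G(x) = x + Σ_{i=1}^k α_i (x - ξ_i)|x - ξ_i| φ((x - ξ_i)/ν)`. -/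
noncomputable def Gfun (k : ℕ) (ξ α : Fin k → ℝ) (ν : ℝ) (x : ℝ) : ℝ :=
  x + ∑ i : Fin k, α i * (x - ξ i) * |x - ξ i| * phi ((x - ξ i) / ν)

open Set Filter Topology

namespace Stmt7

noncomputable def q (x : ℝ) : ℝ := max x 0

lemma q_nonneg (x : ℝ) : 0 ≤ q x := le_max_right x 0

lemma q_of_nonneg {x : ℝ} (h : 0 ≤ x) : q x = x := max_eq_left h

lemma q_of_nonpos {x : ℝ} (h : x ≤ 0) : q x = 0 := max_eq_right h

@[continuity, fun_prop]
lemma continuous_q : Continuous q := continuous_id.max continuous_const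

lemma q_abs_le (x : ℝ) : q x ≤ |x| := max_le (le_abs_self x) (abs_nonneg x)

lemma hasDerivAt_qpow (n : ℕ) (hn : 2 ≤ n) (x : ℝ) :
    HasDerivAt (fun y => q y ^ n) ((n : ℝ) * q x ^ (n - 1)) x := by
  rcases lt_trichotomy x 0 with hx | hx | hx
  · have h0 : (n : ℝ) * q x ^ (n - 1) = 0 := by
      rw [q_of_nonpos hx.le, zero_pow (by omega), mul_zero]
    rw [h0]
    refine (hasDerivAt_const x (0:ℝ)).congr_of_eventuallyEq ?_
    filter_upwards [Iio_mem_nhds hx] with y (hy : y < 0)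
    rw [q_of_nonpos hy.le, zero_pow (by omega)]
  · subst hx
    have h0 : (n : ℝ) * q 0 ^ (n - 1) = 0 := by
      rw [q_of_nonpos le_rfl, zero_pow (by omega), mul_zero]
    rw [h0]
    rw [hasDerivAt_iff_isLittleO]
    have hO : (fun y : ℝ => q y ^ n) =O[𝓝 0] (fun y : ℝ => y ^ 2) := by
      refine Asymptotics.IsBigO.of_bound 1 ?_
      filter_upwards [Metric.ball_mem_nhds (0:ℝ) one_pos] with y hy
      have hy1 : |y| ≤ 1 := by
        have := mem_ball_zero_iff.mp hy
        simpa [Real.norm_eq_abs] using this.le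
      have h2 : q y ^ n ≤ |y| ^ n := pow_le_pow_left₀ (q_nonneg y) (q_abs_le y) n
      have h3 : |y| ^ n ≤ |y| ^ 2 := pow_le_pow_of_le_one (abs_nonneg y) hy1 hn
      have h1 : ‖q y ^ n‖ = q y ^ n := Real.norm_of_nonneg (pow_nonneg (q_nonneg y) n)
      have h4 : ‖y ^ 2‖ = |y| ^ 2 := by rw [Real.norm_eq_abs, abs_pow]
      rw [h1, h4, one_mul]
      exact h2.trans h3
    have ho : (fun y : ℝ => y ^ 2) =o[𝓝 0] (fun y : ℝ => y) := by
      simpa using Asymptotics.isLittleO_pow_id (𝕜 := ℝ) (n := 2) one_lt_two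
    have key : (fun y : ℝ => q y ^ n) =o[𝓝 0] (fun y : ℝ => y) := hO.trans_isLittleO ho
    refine key.congr' ?_ ?_
    · filter_upwards with y
      show q y ^ n = q y ^ n - q 0 ^ n - (y - 0) • (0:ℝ)
      simp [q_of_nonpos (le_refl (0:ℝ)), zero_pow (by omega : n ≠ 0)]
    · filter_upwards with y
      simp
  · have : (fun y => q y ^ n) =ᶠ[𝓝 x] (fun y => y ^ n) := by
      filter_upwards [Ioi_mem_nhds hx] with y (hy : 0 < y)
      rw [q_of_nonneg hy.le]
    rw [q_of_nonneg hx.le]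
    exact (hasDerivAt_pow n x).congr_of_eventuallyEq this

noncomputable def P (t : ℝ) : ℝ := q (1 - t) ^ 4 * q (1 + t) ^ 4
noncomputable def B (t : ℝ) : ℝ :=
  (4 : ℝ) * q (1 - t) ^ 3 * -1 * q (1 + t) ^ 4 + q (1 - t) ^ 4 * ((4 : ℝ) * q (1 + t) ^ 3)
noncomputable def Bd (t : ℝ) : ℝ :=
  12 * q (1 - t) ^ 2 * q (1 + t) ^ 4 - 32 * q (1 - t) ^ 3 * q (1 + t) ^ 3
    + 12 * q (1 - t) ^ 4 * q (1 + t) ^ 2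
noncomputable def s (t : ℝ) : ℝ := q t ^ 2 - q (-t) ^ 2
noncomputable def s1 (t : ℝ) : ℝ := 2 * q t + 2 * q (-t)
noncomputable def e (t : ℝ) : ℝ := if 0 < t then 1 else 0
noncomputable def s2 (t : ℝ) : ℝ := 2 * e t - 2 * e (-t)
noncomputable def psi (t : ℝ) : ℝ := s t * P t
noncomputable def psi1 (t : ℝ) : ℝ := s1 t * P t + s t * B t
noncomputable def psi2 (t : ℝ) : ℝ := s2 t * P t + 2 * (s1 t * B t) + s t * Bd t
noncomputable def psi2p (t : ℝ) : ℝ := 2 * P t + 2 * (s1 t * B t) + s t * Bd t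
noncomputable def psi2m (t : ℝ) : ℝ := -2 * P t + 2 * (s1 t * B t) + s t * Bd t

-- derivative of t ↦ q (1 - t) ^ n
lemma hasDerivAt_q1m (n : ℕ) (hn : 2 ≤ n) (t : ℝ) :
    HasDerivAt (fun t => q (1 - t) ^ n) ((n : ℝ) * q (1 - t) ^ (n - 1) * (-1)) t := by
  have h1 : HasDerivAt (fun t : ℝ => 1 - t) (-1) t := by
    simpa using (hasDerivAt_id t).const_sub (1:ℝ)
  exact (hasDerivAt_qpow n hn (1 - t)).comp t h1

lemma hasDerivAt_q1p (n : ℕ) (hn : 2 ≤ n) (t : ℝ) :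
    HasDerivAt (fun t => q (1 + t) ^ n) ((n : ℝ) * q (1 + t) ^ (n - 1)) t := by
  have h1 : HasDerivAt (fun t : ℝ => 1 + t) 1 t := by
    simpa using (hasDerivAt_id t).const_add (1:ℝ)
  have h2 := (hasDerivAt_qpow n hn (1 + t)).comp t h1
  rw [mul_one] at h2
  exact h2

lemma hasDerivAt_P (t : ℝ) : HasDerivAt P (B t) t := by
  have := (hasDerivAt_q1m 4 (by norm_num) t).mul (hasDerivAt_q1p 4 (by norm_num) t)
  exact this

lemma hasDerivAt_B (t : ℝ) : HasDerivAt B (Bd t) t := by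
  have h1 := ((hasDerivAt_q1m 3 (by norm_num) t).const_mul (4:ℝ)).mul_const (-1:ℝ)
  have h2 := h1.mul (hasDerivAt_q1p 4 (by norm_num) t)
  have h3 := (hasDerivAt_q1m 4 (by norm_num) t).mul
    ((hasDerivAt_q1p 3 (by norm_num) t).const_mul (4:ℝ))
  have := h2.add h3
  convert this using 1
  · rfl
  · rfl
  · rfl
  show Bd t = _
  norm_num [Bd]
  all_goals ring

lemma hasDerivAt_qneg_sq (t : ℝ) :
    HasDerivAt (fun t => q (-t) ^ 2) (-(2 * q (-t))) t := by
  have h1 : HasDerivAt (fun t : ℝ => -t) (-1) t := (hasDerivAt_id t).neg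
  have := (hasDerivAt_qpow 2 le_rfl (-t)).comp t h1
  convert this using 1
  · rfl
  · rfl
  · rfl
  norm_num

lemma hasDerivAt_s (t : ℝ) : HasDerivAt s (s1 t) t := by
  have h1 : HasDerivAt (fun t => q t ^ 2) (2 * q t) t := by
    simpa using hasDerivAt_qpow 2 le_rfl t
  have := h1.sub (hasDerivAt_qneg_sq t)
  convert this using 1
  · rfl
  · rfl
  · rfl
  show s1 t = _
  norm_num [s1]

lemma hasDerivAt_psi (t : ℝ) : HasDerivAt psi (psi1 t) t := by
  have := (hasDerivAt_s t).mul (hasDerivAt_P t)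
  exact this

lemma hasDerivAt_q' {t : ℝ} (ht : t ≠ 0) : HasDerivAt q (e t) t := by
  rcases ht.lt_or_gt with h | h
  · have : (fun y => q y) =ᶠ[𝓝 t] (fun _ => (0:ℝ)) := by
      filter_upwards [Iio_mem_nhds h] with y (hy : y < 0)
      exact q_of_nonpos hy.le
    have h0 : e t = 0 := by simp [e, not_lt.mpr h.le]
    rw [h0]
    exact (hasDerivAt_const t (0:ℝ)).congr_of_eventuallyEq this
  · have : (fun y => q y) =ᶠ[𝓝 t] (fun y => y) := by
      filter_upwards [Ioi_mem_nhds h] with y (hy : 0 < y)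
      exact q_of_nonneg hy.le
    have h0 : e t = 1 := by simp [e, h]
    rw [h0]
    exact (hasDerivAt_id t).congr_of_eventuallyEq this

lemma hasDerivAt_s1 {t : ℝ} (ht : t ≠ 0) : HasDerivAt s1 (s2 t) t := by
  have h1 := (hasDerivAt_q' ht).const_mul (2:ℝ)
  have h2 : HasDerivAt (fun t => 2 * q (-t)) (2 * e (-t) * (-1)) t := by
    exact ((hasDerivAt_q' (neg_ne_zero.mpr ht)).const_mul (2:ℝ)).comp t (hasDerivAt_id t).neg
  have := h1.add h2
  convert this using 1
  · rfl
  · rfl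
  · rfl
  show s2 t = _
  simp [s2]
  ring

lemma hasDerivAt_psi1 {t : ℝ} (ht : t ≠ 0) : HasDerivAt psi1 (psi2 t) t := by
  have h1 := (hasDerivAt_s1 ht).mul (hasDerivAt_P t)
  have h2 := (hasDerivAt_s t).mul (hasDerivAt_B t)
  have := h1.add h2
  convert this using 1
  · rfl
  · rfl
  · rfl
  show psi2 t = _
  simp only [psi2]
  ring

lemma s_eq (t : ℝ) : s t = t * |t| := by
  rcases le_total t 0 with h | h
  · rw [s, q_of_nonpos h, q_of_nonneg (neg_nonneg.mpr h), abs_of_nonpos h]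
    ring
  · rw [s, q_of_nonneg h, q_of_nonpos (neg_nonpos.mpr h), abs_of_nonneg h]
    ring

lemma P_eq_phi (t : ℝ) : P t = phi t := by
  by_cases h : t ∈ Set.Icc (-1 : ℝ) 1
  · obtain ⟨h1, h2⟩ := h
    rw [phi, if_pos ⟨h1, h2⟩, P, q_of_nonneg (by linarith), q_of_nonneg (by linarith)]
    ring
  · rw [phi, if_neg h, P]
    rw [Set.mem_Icc, not_and_or] at h
    rcases h with h | h
    · push_neg at h
      rw [show q (1 + t) = 0 from q_of_nonpos (by linarith)]
      ring
    · push_neg at h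
      rw [show q (1 - t) = 0 from q_of_nonpos (by linarith)]
      ring

lemma q_one : q 1 = 1 := q_of_nonneg zero_le_one

lemma P_zero : P 0 = 1 := by norm_num [P, q_one]
lemma s_zero : s 0 = 0 := by norm_num [s, q_of_nonpos (le_refl (0:ℝ))]
lemma s1_zero : s1 0 = 0 := by norm_num [s1, q_of_nonpos (le_refl (0:ℝ))]
lemma psi1_zero : psi1 0 = 0 := by rw [psi1, s_zero, s1_zero]; ring
lemma psi2p_zero : psi2p 0 = 2 := by rw [psi2p, P_zero, s_zero, s1_zero]; ring
lemma psi2m_zero : psi2m 0 = -2 := by rw [psi2m, P_zero, s_zero, s1_zero]; ring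

lemma q_vanish {t : ℝ} (h : 1 ≤ |t|) : q (1 - t) = 0 ∨ q (1 + t) = 0 := by
  rcases le_abs.mp h with h1 | h1
  · exact Or.inl (q_of_nonpos (by linarith))
  · exact Or.inr (q_of_nonpos (by linarith))

lemma P_vanish {t : ℝ} (h : 1 ≤ |t|) : P t = 0 := by
  rcases q_vanish h with h0 | h0 <;> rw [P, h0] <;> ring

lemma B_vanish {t : ℝ} (h : 1 ≤ |t|) : B t = 0 := by
  rcases q_vanish h with h0 | h0 <;> rw [B, h0] <;> ring

lemma Bd_vanish {t : ℝ} (h : 1 ≤ |t|) : Bd t = 0 := by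
  rcases q_vanish h with h0 | h0 <;> rw [Bd, h0] <;> ring

lemma psi_vanish {t : ℝ} (h : 1 ≤ |t|) : psi t = 0 := by
  rw [psi, P_vanish h]; ring

lemma psi1_vanish {t : ℝ} (h : 1 ≤ |t|) : psi1 t = 0 := by
  rw [psi1, P_vanish h, B_vanish h]; ring

lemma psi2_vanish {t : ℝ} (h : 1 ≤ |t|) : psi2 t = 0 := by
  rw [psi2, P_vanish h, B_vanish h, Bd_vanish h]; ring

lemma psi2_pos {t : ℝ} (h : 0 < t) : psi2 t = psi2p t := by
  rw [psi2, psi2p, s2]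
  have h1 : e t = 1 := by simp [e, h]
  have h2 : e (-t) = 0 := by simp [e, not_lt.mpr (neg_nonpos.mpr h.le)]
  rw [h1, h2]
  ring

lemma psi2_neg {t : ℝ} (h : t < 0) : psi2 t = psi2m t := by
  rw [psi2, psi2m, s2]
  have h1 : e t = 0 := by simp [e, not_lt.mpr h.le]
  have h2 : e (-t) = 1 := by simp [e, neg_pos.mpr h]
  rw [h1, h2]
  ring

@[continuity, fun_prop]
lemma continuous_P : Continuous P := by unfold P; fun_prop

@[continuity, fun_prop]
lemma continuous_B : Continuous B := by unfold B; fun_prop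

@[continuity, fun_prop]
lemma continuous_Bd : Continuous Bd := by unfold Bd; fun_prop

@[continuity, fun_prop]
lemma continuous_s : Continuous s := by unfold s; fun_prop

@[continuity, fun_prop]
lemma continuous_s1 : Continuous s1 := by unfold s1; fun_prop

@[continuity, fun_prop]
lemma continuous_psi : Continuous psi := by unfold psi; fun_prop

@[continuity, fun_prop]
lemma continuous_psi1 : Continuous psi1 := by unfold psi1; fun_prop

@[continuity, fun_prop]
lemma continuous_psi2p : Continuous psi2p := by unfold psi2p; fun_prop

@[continuity, fun_prop]
lemma continuous_psi2m : Continuous psi2m := by unfold psi2m; fun_prop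

lemma gap {k : ℕ} {ξ : Fin k → ℝ} (hξ : StrictMono ξ) {ν : ℝ}
    (hν2 : ∀ i j : Fin k, (i : ℕ) + 1 = (j : ℕ) → ν < (ξ j - ξ i) / 2)
    {i j : Fin k} (hij : i ≠ j) : 2 * ν < |ξ i - ξ j| := by
  have key : ∀ a b : Fin k, a < b → 2 * ν < ξ b - ξ a := by
    intro a b hab
    have hlt : (a : ℕ) + 1 ≤ (b : ℕ) := by
      have := Fin.lt_iff_val_lt_val.mp hab
      omega
    have hbk : (b : ℕ) < k := b.isLt
    set a' : Fin k := ⟨(a : ℕ) + 1, by omega⟩ with ha'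
    have h1 := hν2 a a' rfl
    have h2 : ξ a' ≤ ξ b := hξ.monotone (by rw [Fin.le_def]; exact hlt)
    linarith
  rcases hij.lt_or_gt with h | h
  · have := key i j h
    have hlt : ξ i < ξ j := hξ h
    rw [abs_of_neg (by linarith)]
    linarith
  · have := key j i h
    have hlt : ξ j < ξ i := hξ h
    rw [abs_of_pos (by linarith)]
    linarith

lemma piece_isOpen (k : ℕ) (ξ : Fin k → ℝ) (i : Fin (k + 1)) : IsOpen (piece k ξ i) := by
  have : piece k ξ i =
      (⋂ j : Fin k, {x : ℝ | (j : ℕ) < (i : ℕ) → ξ j < x}) ∩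
        ⋂ j : Fin k, {x : ℝ | (i : ℕ) ≤ (j : ℕ) → x < ξ j} := by
    ext x
    simp [piece, Set.mem_iInter]
  rw [this]
  refine IsOpen.inter (isOpen_iInter_of_finite fun j => ?_) (isOpen_iInter_of_finite fun j => ?_)
  · by_cases h : (j : ℕ) < (i : ℕ)
    · simp only [h, forall_true_left]
      exact isOpen_lt continuous_const continuous_id
    · have : {x : ℝ | (j : ℕ) < (i : ℕ) → ξ j < x} = Set.univ := by
        ext x; simp [h]
      rw [this]; exact isOpen_univ
  · by_cases h : (i : ℕ) ≤ (j : ℕ)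
    · simp only [h, forall_true_left]
      exact isOpen_lt continuous_id continuous_const
    · have : {x : ℝ | (i : ℕ) ≤ (j : ℕ) → x < ξ j} = Set.univ := by
        ext x; simp [h]
      rw [this]; exact isOpen_univ

lemma exists_piece_mem {k : ℕ} {ξ : Fin k → ℝ} (hξ : StrictMono ξ) {x : ℝ}
    (hx : ∀ i, x ≠ ξ i) : ∃ i : Fin (k + 1), x ∈ piece k ξ i := by
  classical
  set S : Finset (Fin k) := Finset.univ.filter (fun j => ξ j < x) with hS
  by_cases hne : S.Nonempty
  · set m := S.max' hne with hm
    have hmS : m ∈ S := S.max'_mem hne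
    have hmx : ξ m < x := by
      simpa [hS] using hmS
    refine ⟨⟨(m : ℕ) + 1, by omega⟩, ?_, ?_⟩
    · intro j hj
      have hjm : j ≤ m := by
        rw [Fin.le_def]
        simpa using Nat.lt_succ_iff.mp hj
      exact lt_of_le_of_lt (hξ.monotone hjm) hmx
    · intro j hj
      have hjS : j ∉ S := by
        intro hjS
        have := S.le_max' j hjS
        rw [Fin.le_def] at this
        simp at hj
        omega
      have : ¬ξ j < x := by simpa [hS] using hjS
      exact lt_of_le_of_ne (not_lt.mp this) (hx j)
  · refine ⟨⟨0, by omega⟩, ?_, ?_⟩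
    · intro j hj
      simp at hj
    · intro j _
      have hjS : j ∉ S := by simp [Finset.not_nonempty_iff_eq_empty.mp hne]
      have : ¬ξ j < x := by simpa [hS] using hjS
      exact lt_of_le_of_ne (not_lt.mp this) (hx j)

lemma continuousAt_psi2 {t : ℝ} (ht : t ≠ 0) : ContinuousAt psi2 t := by
  rcases ht.lt_or_gt with h | h
  · refine (continuous_psi2m.continuousAt).congr ?_
    filter_upwards [Iio_mem_nhds h] with y (hy : y < 0)
    exact (psi2_neg hy).symm
  · refine (continuous_psi2p.continuousAt).congr ?_
    filter_upwards [Ioi_mem_nhds h] with y (hy : 0 < y)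
    exact (psi2_pos hy).symm

lemma cont_of_local_lipschitz {f : ℝ → ℝ} {x : ℝ} {U : Set ℝ} (hU : U ∈ nhds x)
    {K : ℝ} (hb : ∀ y ∈ U, |f y - f x| ≤ K * |y - x|) : ContinuousAt f x := by
  rw [ContinuousAt, tendsto_iff_norm_sub_tendsto_zero]
  have hc : Continuous fun y : ℝ => K * |y - x| := by fun_prop
  have h0 : Tendsto (fun y : ℝ => K * |y - x|) (nhds x) (nhds 0) := by
    have := hc.tendsto x
    simpa using this
  refine squeeze_zero' (Eventually.of_forall fun y => norm_nonneg _) ?_ h0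
  filter_upwards [hU] with y hy
  simpa [Real.norm_eq_abs] using hb y hy

end Stmt7

open Set Filter Topology Stmt7

/-- Under (A1)-(A4), the transformed coefficients `μ̃` and `σ̃` are
continuous on `ℝ`. -/
theorem stmt_7 (p₀ p₁ ℓμ ℓσ : ℝ) (hp₀ : 2 ≤ p₀) (hp₁ : 2 ≤ p₁)
    (hℓμ : 0 < ℓμ) (hℓσ0 : 0 ≤ ℓσ) (hℓσ : ℓσ ≤ ℓμ / 2)
    (μ σ : ℝ → ℝ)
    -- (A1)
    (c₁ : ℝ) (hc₁ : 0 < c₁)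
    (hA1 : ∀ x : ℝ, 2 * x * μ x + (p₀ - 1) * (σ x) ^ 2 ≤ c₁ * (1 + x ^ 2))
    -- (A2): discontinuity points ξ₁ < … < ξ_k, k ≥ 1
    (c₂ : ℝ) (hc₂ : 0 < c₂) (k : ℕ) (hk : 1 ≤ k) (ξ : Fin k → ℝ) (hξ : StrictMono ξ)
    (hA2i : ∀ i : Fin (k + 1), ∀ x ∈ piece k ξ i, ∀ y ∈ piece k ξ i,
      2 * (x - y) * (μ x - μ y) + (p₁ - 1) * (σ x - σ y) ^ 2 ≤ c₂ * |x - y| ^ 2)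
    (hA2ii : ∀ i : Fin (k + 1), ∀ x ∈ piece k ξ i, ∀ y ∈ piece k ξ i,
      |μ x - μ y| ≤ c₂ * (1 + |x| ^ ℓμ + |y| ^ ℓμ) * |x - y|)
    -- (A3)
    (c₃ : ℝ) (hc₃ : 0 < c₃)
    (hA3 : ∀ x y : ℝ, |σ x - σ y| ≤ c₃ * (1 + |x| ^ ℓσ + |y| ^ ℓσ) * |x - y|)
    -- (A4)
    (hA4 : ∀ i : Fin k, σ (ξ i) ≠ 0)
    -- one-sided limits μ(ξ_i-) and μ(ξ_i+)
    (μm μp : Fin k → ℝ)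
    (hμm : ∀ i : Fin k, Filter.Tendsto μ (nhdsWithin (ξ i) (Set.Iio (ξ i))) (nhds (μm i)))
    (hμp : ∀ i : Fin k, Filter.Tendsto μ (nhdsWithin (ξ i) (Set.Ioi (ξ i))) (nhds (μp i)))
    -- α_i = (μ(ξ_i-) - μ(ξ_i+)) / (2 σ(ξ_i)²)
    (α : Fin k → ℝ) (hα : ∀ i : Fin k, α i = (μm i - μp i) / (2 * (σ (ξ i)) ^ 2))
    -- ν ∈ (0, ρ_{ξ,α}):  ν·8|α_i| < 1 encodes ν < 1/(8|α_i|) with the convention 1/0 = ∞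
    (ν : ℝ) (hν0 : 0 < ν)
    (hν1 : ∀ i : Fin k, ν * (8 * |α i|) < 1)
    (hν2 : ∀ i j : Fin k, (i : ℕ) + 1 = (j : ℕ) → ν < (ξ j - ξ i) / 2)
    -- G is differentiable with derivative G'; G' is differentiable off the points ξ_i
    -- with derivative G'', extended to the points ξ_i by the prescribed formula
    (G' G'' Ginv : ℝ → ℝ)
    (hG' : ∀ x : ℝ, HasDerivAt (Gfun k ξ α ν) (G' x) x)
    (hG''a : ∀ x : ℝ, (∀ i : Fin k, x ≠ ξ i) → HasDerivAt G' (G'' x) x)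
    (hG''b : ∀ i : Fin k, G'' (ξ i) = 2 * α i + 2 * (μp i - μ (ξ i)) / (σ (ξ i)) ^ 2)
    -- Ginv is the inverse of the bijection G
    (hGinv1 : ∀ x : ℝ, Ginv (Gfun k ξ α ν x) = x)
    (hGinv2 : ∀ x : ℝ, Gfun k ξ α ν (Ginv x) = x) :
    -- μ̃ = (G'·μ + ½·G''·σ²) ∘ G⁻¹  and  σ̃ = (G'·σ) ∘ G⁻¹
    Continuous (fun x : ℝ =>
      G' (Ginv x) * μ (Ginv x) + (1 / 2) * G'' (Ginv x) * (σ (Ginv x)) ^ 2) ∧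
    Continuous (fun x : ℝ => G' (Ginv x) * σ (Ginv x)) := by
  have hν0' : (ν : ℝ) ≠ 0 := ne_of_gt hν0
  -- rewrite of G
  have hGre : Gfun k ξ α ν = fun x => x + ∑ i : Fin k, α i * (ν ^ 2 * psi ((x - ξ i) / ν)) := by
    funext x
    rw [Gfun]
    congr 1
    refine Finset.sum_congr rfl fun i _ => ?_
    set t := (x - ξ i) / ν with ht
    have hxt : x - ξ i = ν * t := by rw [ht]; field_simp
    rw [psi, s_eq, P_eq_phi, hxt, abs_mul, abs_of_pos hν0]
    ring
  -- the explicit first derivative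
  set Gp : ℝ → ℝ := fun x => 1 + ∑ i : Fin k, α i * (ν * psi1 ((x - ξ i) / ν)) with hGpdef
  have hGp : ∀ x, HasDerivAt (Gfun k ξ α ν) (Gp x) x := by
    intro x
    rw [hGre]
    have hsum : HasDerivAt (fun x => ∑ i : Fin k, α i * (ν ^ 2 * psi ((x - ξ i) / ν)))
        (∑ i : Fin k, α i * (ν * psi1 ((x - ξ i) / ν))) x := by
      refine HasDerivAt.fun_sum fun i _ => ?_
      have hin : HasDerivAt (fun x : ℝ => (x - ξ i) / ν) (1 / ν) x :=
        ((hasDerivAt_id x).sub_const (ξ i)).div_const ν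
      have hcomp := (hasDerivAt_psi ((x - ξ i) / ν)).comp x hin
      have h2 := (hcomp.const_mul (ν ^ 2)).const_mul (α i)
      convert h2 using 1
      · rfl
      · rfl
      field_simp
    have := (hasDerivAt_id x).add hsum
    exact this
  have hG'eq : ∀ x, G' x = Gp x := fun x => (hG' x).unique (hGp x)
  have hG'fun : G' = Gp := funext hG'eq
  have hGpc : Continuous Gp := by
    refine continuous_const.add (continuous_finset_sum _ fun i _ => ?_)
    exact continuous_const.mul (continuous_const.mul (continuous_psi1.comp (by fun_prop)))
  have hG'c : Continuous G' := by rw [hG'fun]; exact hGpc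
  -- the explicit second derivative off the points ξ i
  set g : ℝ → ℝ := fun x => ∑ i : Fin k, α i * psi2 ((x - ξ i) / ν) with hgdef
  have hGpp : ∀ x, (∀ i, x ≠ ξ i) → HasDerivAt Gp (g x) x := by
    intro x hx
    have hsum : HasDerivAt (fun x => ∑ i : Fin k, α i * (ν * psi1 ((x - ξ i) / ν)))
        (∑ i : Fin k, α i * psi2 ((x - ξ i) / ν)) x := by
      refine HasDerivAt.fun_sum fun i _ => ?_
      have ht0 : (x - ξ i) / ν ≠ 0 := div_ne_zero (sub_ne_zero.mpr (hx i)) hν0'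
      have hin : HasDerivAt (fun x : ℝ => (x - ξ i) / ν) (1 / ν) x :=
        ((hasDerivAt_id x).sub_const (ξ i)).div_const ν
      have hcomp := (hasDerivAt_psi1 ht0).comp x hin
      have h2 := (hcomp.const_mul ν).const_mul (α i)
      convert h2 using 1
      · rfl
      · rfl
      field_simp
    simpa [hGpdef] using hsum.const_add 1
  have hG''eq : ∀ x, (∀ i, x ≠ ξ i) → G'' x = g x := by
    intro x hx
    have h1 := hG''a x hx
    rw [hG'fun] at h1
    exact h1.unique (hGpp x hx)
  -- continuity of Ginv
  have hGcont : Continuous (Gfun k ξ α ν) :=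
    continuous_iff_continuousAt.mpr fun x => (hGp x).continuousAt
  have hGinj : Function.Injective (Gfun k ξ α ν) := fun a b h => by
    have := congrArg Ginv h
    rwa [hGinv1, hGinv1] at this
  have hGsurjinv : Function.Surjective Ginv := fun x => ⟨Gfun k ξ α ν x, hGinv1 x⟩
  have hGinvc : Continuous Ginv := by
    rcases hGcont.strictMono_of_inj hGinj with hm | ha
    · have hmono : Monotone Ginv := by
        intro a b hab
        by_contra h
        push_neg at h
        have := hm h
        rw [hGinv2, hGinv2] at this
        exact absurd this (not_lt.mpr hab)
      exact hmono.continuous_of_surjective hGsurjinv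
    · have hanti : ∀ a b : ℝ, a ≤ b → Ginv b ≤ Ginv a := by
        intro a b hab
        by_contra h
        push_neg at h
        have := ha h
        rw [hGinv2, hGinv2] at this
        exact absurd this (not_lt.mpr hab)
      have h2 : Monotone (fun y : ℝ => Ginv (-y)) := fun a b hab =>
        hanti (-b) (-a) (neg_le_neg hab)
      have h3 : Function.Surjective (fun y : ℝ => Ginv (-y)) := fun x => by
        obtain ⟨y, hy⟩ := hGsurjinv x
        exact ⟨-y, by simpa using hy⟩
      have h4 := h2.continuous_of_surjective h3
      have h5 : Ginv = (fun y : ℝ => Ginv (-y)) ∘ (fun y : ℝ => -y) := by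
        funext y; simp
      rw [h5]
      exact h4.comp continuous_neg
  -- G' = 1 at the points ξ i
  have hGpξ : ∀ i : Fin k, Gp (ξ i) = 1 := by
    intro i
    have hz : ∀ j ∈ Finset.univ, α j * (ν * psi1 ((ξ i - ξ j) / ν)) = 0 := by
      intro j _
      by_cases hji : j = i
      · subst hji
        simp [psi1_zero]
      · have hgap := gap hξ hν2 (Ne.symm hji)
        have h1 : 1 ≤ |(ξ i - ξ j) / ν| := by
          rw [abs_div, abs_of_pos hν0, le_div_iff₀ hν0]
          linarith
        rw [psi1_vanish h1]
        ring
    simp only [hGpdef, Finset.sum_eq_zero hz, add_zero]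
  -- eventual separation near ξ i
  have hnear : ∀ i : Fin k, ∀ᶠ x in 𝓝 (ξ i),
      ∀ j : Fin k, j ≠ i → (1 ≤ |(x - ξ j) / ν| ∧ x ≠ ξ j) := by
    intro i
    filter_upwards [Metric.ball_mem_nhds (ξ i) hν0] with x hx j hji
    have hd : |x - ξ i| < ν := by simpa [Real.dist_eq] using hx
    have hgap := gap hξ hν2 (Ne.symm hji)
    have htri : |ξ j - ξ i| ≤ |ξ j - x| + |x - ξ i| := abs_sub_le _ _ _
    have hcomm : |ξ j - ξ i| = |ξ i - ξ j| := abs_sub_comm _ _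
    have hcomm2 : |ξ j - x| = |x - ξ j| := abs_sub_comm _ _
    have h1 : ν < |x - ξ j| := by
      rw [hcomm] at htri
      rw [hcomm2] at htri
      linarith
    constructor
    · rw [abs_div, abs_of_pos hν0, le_div_iff₀ hν0]
      linarith
    · intro he
      rw [he] at h1
      simp at h1
      linarith
  -- one-sided limits of g at ξ i
  have hgR : ∀ i : Fin k, Tendsto g (𝓝[>] (ξ i)) (𝓝 (α i * 2)) := by
    intro i
    have hcongr : g =ᶠ[𝓝[>] (ξ i)] fun x => α i * psi2 ((x - ξ i) / ν) := by
      filter_upwards [eventually_nhdsWithin_of_eventually_nhds (hnear i)] with x hx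
      rw [hgdef]
      exact Finset.sum_eq_single_of_mem i (Finset.mem_univ i)
        (fun j _ hji => by rw [psi2_vanish (hx j hji).1]; ring)
    have hin : Tendsto (fun x => (x - ξ i) / ν) (𝓝[>] (ξ i)) (𝓝[>] (0 : ℝ)) := by
      apply tendsto_nhdsWithin_of_tendsto_nhds_of_eventually_within
      · have hcont : Continuous fun x : ℝ => (x - ξ i) / ν := by fun_prop
        have hten : Tendsto (fun x => (x - ξ i) / ν) (𝓝[>] (ξ i)) (𝓝 ((ξ i - ξ i) / ν)) :=
          (hcont.tendsto (ξ i)).mono_left nhdsWithin_le_nhds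
        simpa using hten
      · filter_upwards [self_mem_nhdsWithin] with x (hx : ξ i < x)
        exact div_pos (sub_pos.mpr hx) hν0
    have hpsi : Tendsto psi2 (𝓝[>] (0 : ℝ)) (𝓝 2) := by
      have h1 : Tendsto psi2p (𝓝[>] (0 : ℝ)) (𝓝 2) := by
        have h2 : Tendsto psi2p (𝓝[>] (0 : ℝ)) (𝓝 (psi2p 0)) :=
          (continuous_psi2p.tendsto 0).mono_left nhdsWithin_le_nhds
        rwa [psi2p_zero] at h2
      refine Filter.Tendsto.congr' ?_ h1
      filter_upwards [self_mem_nhdsWithin] with t (ht : 0 < t)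
      exact (psi2_pos ht).symm
    have hmain := (hpsi.comp hin).const_mul (α i)
    exact Filter.Tendsto.congr' hcongr.symm hmain
  have hgL : ∀ i : Fin k, Tendsto g (𝓝[<] (ξ i)) (𝓝 (α i * -2)) := by
    intro i
    have hcongr : g =ᶠ[𝓝[<] (ξ i)] fun x => α i * psi2 ((x - ξ i) / ν) := by
      filter_upwards [eventually_nhdsWithin_of_eventually_nhds (hnear i)] with x hx
      rw [hgdef]
      exact Finset.sum_eq_single_of_mem i (Finset.mem_univ i)
        (fun j _ hji => by rw [psi2_vanish (hx j hji).1]; ring)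
    have hin : Tendsto (fun x => (x - ξ i) / ν) (𝓝[<] (ξ i)) (𝓝[<] (0 : ℝ)) := by
      apply tendsto_nhdsWithin_of_tendsto_nhds_of_eventually_within
      · have hcont : Continuous fun x : ℝ => (x - ξ i) / ν := by fun_prop
        have hten : Tendsto (fun x => (x - ξ i) / ν) (𝓝[<] (ξ i)) (𝓝 ((ξ i - ξ i) / ν)) :=
          (hcont.tendsto (ξ i)).mono_left nhdsWithin_le_nhds
        simpa using hten
      · filter_upwards [self_mem_nhdsWithin] with x (hx : x < ξ i)
        exact div_neg_of_neg_of_pos (sub_neg.mpr hx) hν0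
    have hpsi : Tendsto psi2 (𝓝[<] (0 : ℝ)) (𝓝 (-2)) := by
      have h1 : Tendsto psi2m (𝓝[<] (0 : ℝ)) (𝓝 (-2)) := by
        have h2 : Tendsto psi2m (𝓝[<] (0 : ℝ)) (𝓝 (psi2m 0)) :=
          (continuous_psi2m.tendsto 0).mono_left nhdsWithin_le_nhds
        rwa [psi2m_zero] at h2
      refine Filter.Tendsto.congr' ?_ h1
      filter_upwards [self_mem_nhdsWithin] with t (ht : t < 0)
      exact (psi2_neg ht).symm
    have hmain := (hpsi.comp hin).const_mul (α i)
    exact Filter.Tendsto.congr' hcongr.symm hmain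
  -- continuity of σ
  have hσc : Continuous σ := by
    rw [continuous_iff_continuousAt]
    intro x
    refine cont_of_local_lipschitz (Metric.ball_mem_nhds x one_pos)
      (K := c₃ * (1 + (|x| + 1) ^ ℓσ + |x| ^ ℓσ)) ?_
    intro y hy
    have h1 := hA3 y x
    have hyx : |y - x| < 1 := by simpa [Real.dist_eq] using hy
    have h2 : |y| ^ ℓσ ≤ (|x| + 1) ^ ℓσ := by
      apply Real.rpow_le_rpow (abs_nonneg y) ?_ hℓσ0
      have h3 := abs_sub_abs_le_abs_sub y x
      linarith
    calc |σ y - σ x| ≤ c₃ * (1 + |y| ^ ℓσ + |x| ^ ℓσ) * |y - x| := h1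
      _ ≤ c₃ * (1 + (|x| + 1) ^ ℓσ + |x| ^ ℓσ) * |y - x| := by gcongr
  -- continuity of μ off the points ξ i
  have hμc : ∀ x : ℝ, (∀ i, x ≠ ξ i) → ContinuousAt μ x := by
    intro x hx
    obtain ⟨i, hxi⟩ := exists_piece_mem hξ hx
    have hU : piece k ξ i ∩ Metric.ball x 1 ∈ 𝓝 x :=
      Filter.inter_mem ((piece_isOpen k ξ i).mem_nhds hxi) (Metric.ball_mem_nhds x one_pos)
    refine cont_of_local_lipschitz hU (K := c₂ * (1 + (|x| + 1) ^ ℓμ + |x| ^ ℓμ)) ?_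
    rintro y ⟨hy1, hy2⟩
    have h1 := hA2ii i y hy1 x hxi
    have hyx : |y - x| < 1 := by simpa [Real.dist_eq] using hy2
    have h2 : |y| ^ ℓμ ≤ (|x| + 1) ^ ℓμ := by
      apply Real.rpow_le_rpow (abs_nonneg y) ?_ hℓμ.le
      have h3 := abs_sub_abs_le_abs_sub y x
      linarith
    calc |μ y - μ x| ≤ c₂ * (1 + |y| ^ ℓμ + |x| ^ ℓμ) * |y - x| := h1
      _ ≤ c₂ * (1 + (|x| + 1) ^ ℓμ + |x| ^ ℓμ) * |y - x| := by gcongr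
  -- continuity of G'' off the points ξ i
  have hG''c : ∀ x : ℝ, (∀ i, x ≠ ξ i) → ContinuousAt G'' x := by
    intro x hx
    have hUopen : IsOpen {y : ℝ | ∀ i : Fin k, y ≠ ξ i} := by
      have : {y : ℝ | ∀ i : Fin k, y ≠ ξ i} = ⋂ i : Fin k, {ξ i}ᶜ := by
        ext y; simp [Set.mem_iInter]
      rw [this]
      exact isOpen_iInter_of_finite fun i => isOpen_compl_singleton
    have hgc : ContinuousAt g x := by
      refine tendsto_finset_sum _ fun i _ => ?_
      have ht0 : (x - ξ i) / ν ≠ 0 := div_ne_zero (sub_ne_zero.mpr (hx i)) hν0'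
      have hin : ContinuousAt (fun y : ℝ => (y - ξ i) / ν) x := by fun_prop
      exact continuousAt_const.mul (ContinuousAt.comp (f := fun y : ℝ => (y - ξ i) / ν) (continuousAt_psi2 ht0) hin)
    refine hgc.congr ?_
    filter_upwards [hUopen.mem_nhds hx] with y hy
    exact (hG''eq y hy).symm
  -- continuity of the untransformed μ̃ ∘ G and σ̃ ∘ G
  have hf₂ : Continuous fun x => G' x * σ x := hG'c.mul hσc
  have hf₁ : Continuous fun x => G' x * μ x + 1 / 2 * G'' x * σ x ^ 2 := by
    rw [continuous_iff_continuousAt]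
    intro x
    by_cases hx : ∀ i : Fin k, x ≠ ξ i
    · exact (hG'c.continuousAt.mul (hμc x hx)).add
        ((continuousAt_const.mul (hG''c x hx)).mul (hσc.continuousAt.pow 2))
    · push_neg at hx
      obtain ⟨i, rfl⟩ := hx
      have hσ0 := hA4 i
      have hG'ξ : G' (ξ i) = 1 := by rw [hG'eq, hGpξ]
      have hG''T : ∀ s' : Set ℝ, (∀ x ∈ s', x ≠ ξ i) →
          G'' =ᶠ[𝓝[s'] (ξ i)] g := by
        intro s' hs'
        filter_upwards [eventually_nhdsWithin_of_eventually_nhds (hnear i),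
          self_mem_nhdsWithin] with x h1 h2
        refine hG''eq x fun j => ?_
        by_cases hji : j = i
        · subst hji; exact hs' x h2
        · exact (h1 j hji).2
      rw [continuousAt_iff_continuous_left'_right']
      constructor
      · -- left continuity
        have hG'T : Tendsto G' (𝓝[<] (ξ i)) (𝓝 1) := by
          have h0 : Tendsto G' (𝓝[<] (ξ i)) (𝓝 (G' (ξ i))) :=
            (hG'c.tendsto (ξ i)).mono_left nhdsWithin_le_nhds
          rwa [hG'ξ] at h0
        have hσT : Tendsto σ (𝓝[<] (ξ i)) (𝓝 (σ (ξ i))) :=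
          (hσc.tendsto (ξ i)).mono_left nhdsWithin_le_nhds
        have hG''L : Tendsto G'' (𝓝[<] (ξ i)) (𝓝 (α i * -2)) :=
          Filter.Tendsto.congr' (hG''T (Set.Iio (ξ i)) fun x hx => ne_of_lt hx).symm (hgL i)
        have hT := (hG'T.mul (hμm i)).add
          (((tendsto_const_nhds (x := (1:ℝ)/2)).mul hG''L).mul (hσT.pow 2))
        have hval : 1 * μm i + 1 / 2 * (α i * -2) * σ (ξ i) ^ 2 =
            G' (ξ i) * μ (ξ i) + 1 / 2 * G'' (ξ i) * σ (ξ i) ^ 2 := by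
          rw [hG'ξ, hG''b i, hα i]
          field_simp
          ring
        rw [hval] at hT
        exact hT
      · -- right continuity
        have hG'T : Tendsto G' (𝓝[>] (ξ i)) (𝓝 1) := by
          have h0 : Tendsto G' (𝓝[>] (ξ i)) (𝓝 (G' (ξ i))) :=
            (hG'c.tendsto (ξ i)).mono_left nhdsWithin_le_nhds
          rwa [hG'ξ] at h0
        have hσT : Tendsto σ (𝓝[>] (ξ i)) (𝓝 (σ (ξ i))) :=
          (hσc.tendsto (ξ i)).mono_left nhdsWithin_le_nhds
        have hG''R : Tendsto G'' (𝓝[>] (ξ i)) (𝓝 (α i * 2)) :=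
          Filter.Tendsto.congr' (hG''T (Set.Ioi (ξ i)) fun x hx => ne_of_gt hx).symm (hgR i)
        have hT := (hG'T.mul (hμp i)).add
          (((tendsto_const_nhds (x := (1:ℝ)/2)).mul hG''R).mul (hσT.pow 2))
        have hval : 1 * μp i + 1 / 2 * (α i * 2) * σ (ξ i) ^ 2 =
            G' (ξ i) * μ (ξ i) + 1 / 2 * G'' (ξ i) * σ (ξ i) ^ 2 := by
          rw [hG'ξ, hG''b i]
          field_simp
          ring
        rw [hval] at hT
        exact hT
  exact ⟨hf₁.comp hGinvc, hf₂.comp hGinvc⟩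
end

section
/- Assume μ, σ : ℝ → ℝ satisfy conditions (A1)–(A4) with parameters p₀, p₁ ∈ [2,∞), ℓ_μ ∈ (0,∞), ℓ_σ ∈ [0, ℓ_μ/2], and let μ̃, σ̃ : ℝ → ℝ be the transformed coefficients defined via the function G. Then μ̃ and σ̃ satisfy the coercivity condition (A1): there exists c ∈ (0,∞) such that for all x ∈ ℝ, 2x·μ̃(x) + (p₀−1)·σ̃(x)² ≤ c·(1+x²). -/
lemma prod2_le {a b A B : ℝ} (ha : |a| ≤ A) (hb : |b| ≤ B) : |a * b| ≤ A * B := by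
  rw [abs_mul]; exact mul_le_mul ha hb (abs_nonneg _) ((abs_nonneg a).trans ha)

lemma hasDerivAt_maxpow (n : ℕ) (hn : 2 ≤ n) (t : ℝ) :
    HasDerivAt (fun s : ℝ => max s 0 ^ n) ((n : ℝ) * max t 0 ^ (n - 1)) t := by
  rcases lt_trichotomy t 0 with ht | ht | ht
  · have h0 : HasDerivAt (fun _ : ℝ => (0:ℝ)) 0 t := hasDerivAt_const t 0
    have heq : (fun s : ℝ => max s 0 ^ n) =ᶠ[nhds t] fun _ => (0:ℝ) := by
      filter_upwards [Iio_mem_nhds ht] with s hs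
      rw [Set.mem_Iio] at hs
      simp [max_eq_right hs.le, zero_pow (by omega : n ≠ 0)]
    have := h0.congr_of_eventuallyEq heq
    simpa [max_eq_right ht.le, zero_pow (by omega : n - 1 ≠ 0)] using this
  · subst ht
    rw [hasDerivAt_iff_tendsto_slope]
    simp only [max_self, zero_pow (by omega : n - 1 ≠ 0), mul_zero]
    apply squeeze_zero_norm' (a := fun s : ℝ => |s| ^ (n - 1))
    · filter_upwards with s
      rcases le_or_gt s 0 with hs | hs
      · simp [slope_def_field, max_eq_right hs, zero_pow (by omega : n ≠ 0),
          pow_nonneg (abs_nonneg s)]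
      · have hms : max s 0 = s := max_eq_left hs.le
        rw [slope_def_field, hms]
        have h2 : s ^ n - (max (0:ℝ) 0) ^ n = s ^ n := by
          simp [zero_pow (by omega : n ≠ 0)]
        rw [sub_zero, h2]
        have h3 : s ^ n / s = s ^ (n - 1) := by
          rw [eq_comm, eq_div_iff hs.ne', ← pow_succ]
          congr 1; omega
        rw [h3, Real.norm_eq_abs, abs_pow]
    · have : Filter.Tendsto (fun s : ℝ => |s| ^ (n - 1)) (nhds 0) (nhds 0) := by
        have := ((continuous_abs.tendsto (0:ℝ)).pow (n-1))
        simpa [zero_pow (by omega : n - 1 ≠ 0)] using this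
      exact this.mono_left nhdsWithin_le_nhds
  · have heq : (fun s : ℝ => max s 0 ^ n) =ᶠ[nhds t] fun s => s ^ n := by
      filter_upwards [Ioi_mem_nhds ht] with s hs
      rw [Set.mem_Ioi] at hs
      simp [max_eq_left hs.le]
    have := ((hasDerivAt_pow n t).congr_of_eventuallyEq heq)
    simpa [max_eq_left ht.le] using this

lemma phi_eq (x : ℝ) : phi x = max (1 - x ^ 2) 0 ^ 4 := by
  unfold phi
  by_cases h : x ∈ Set.Icc (-1 : ℝ) 1
  · rw [if_pos h]
    obtain ⟨h1, h2⟩ := h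
    rw [max_eq_left (by nlinarith)]
  · rw [if_neg h]
    rw [Set.mem_Icc, not_and_or, not_le, not_le] at h
    have : 1 - x ^ 2 < 0 := by rcases h with h | h <;> nlinarith
    rw [max_eq_right this.le, zero_pow (by norm_num)]

noncomputable def dphi (x : ℝ) : ℝ := -8 * x * max (1 - x ^ 2) 0 ^ 3
noncomputable def ddphi (x : ℝ) : ℝ :=
  -8 * max (1 - x ^ 2) 0 ^ 3 + 48 * x ^ 2 * max (1 - x ^ 2) 0 ^ 2

lemma hasDerivAt_phi (x : ℝ) : HasDerivAt phi (dphi x) x := by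
  have h1 : HasDerivAt (fun y : ℝ => 1 - y ^ 2) (-(2 * x)) x := by
    simpa using (hasDerivAt_pow 2 x).const_sub 1
  have h2 := (hasDerivAt_maxpow 4 (by norm_num) (1 - x ^ 2)).comp x h1
  have heq : phi = (fun s : ℝ => max s 0 ^ 4) ∘ (fun y : ℝ => 1 - y ^ 2) := by
    funext y; exact phi_eq y
  rw [heq]
  refine h2.congr_deriv ?_; symm
  show dphi x = (4 : ℝ) * max (1 - x ^ 2) 0 ^ (4 - 1) * (-(2 * x))
  unfold dphi; norm_num; ring

lemma hasDerivAt_dphi (x : ℝ) : HasDerivAt dphi (ddphi x) x := by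
  have h1 : HasDerivAt (fun y : ℝ => 1 - y ^ 2) (-(2 * x)) x := by
    simpa using (hasDerivAt_pow 2 x).const_sub 1
  have h2 := (hasDerivAt_maxpow 3 (by norm_num) (1 - x ^ 2)).comp x h1
  have h3 : HasDerivAt (fun y : ℝ => -8 * y) (-8 : ℝ) x := by
    simpa using (hasDerivAt_id x).const_mul (-8 : ℝ)
  have h4 := h3.mul h2
  have heq : dphi = fun y : ℝ => (-8 * y) *
      (((fun s : ℝ => max s 0 ^ 3) ∘ (fun y : ℝ => 1 - y ^ 2)) y) := by
    funext y; rfl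
  rw [heq]
  refine h4.congr_deriv ?_; symm
  show ddphi x = (-8 : ℝ) * ((fun s : ℝ => max s 0 ^ 3) ∘ fun y => 1 - y ^ 2) x
      + (-8 * x) * ((3 : ℝ) * max (1 - x ^ 2) 0 ^ (3 - 1) * (-(2 * x)))
  unfold ddphi; simp only [Function.comp_apply]; norm_num; ring

lemma max_mem01 (x : ℝ) : 0 ≤ max (1 - x ^ 2) 0 ∧ max (1 - x ^ 2) 0 ≤ 1 :=
  ⟨le_max_right _ _, max_le (by nlinarith [sq_nonneg x]) zero_le_one⟩

lemma phi_nonneg (x : ℝ) : 0 ≤ phi x := by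
  rw [phi_eq]; positivity

lemma phi_le_one (x : ℝ) : phi x ≤ 1 := by
  rw [phi_eq]
  have := max_mem01 x
  calc max (1 - x ^ 2) 0 ^ 4 ≤ 1 ^ 4 := pow_le_pow_left₀ this.1 this.2 4
  _ = 1 := one_pow 4

lemma max_zero_of_one_le (x : ℝ) (h : 1 ≤ |x|) : max (1 - x ^ 2) 0 = 0 := by
  apply max_eq_right
  nlinarith [sq_abs x]

lemma phi_zero (x : ℝ) (h : 1 ≤ |x|) : phi x = 0 := by
  rw [phi_eq, max_zero_of_one_le x h, zero_pow (by norm_num)]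

lemma dphi_zero (x : ℝ) (h : 1 ≤ |x|) : dphi x = 0 := by
  unfold dphi; rw [max_zero_of_one_le x h]; ring

lemma ddphi_zero (x : ℝ) (h : 1 ≤ |x|) : ddphi x = 0 := by
  unfold ddphi; rw [max_zero_of_one_le x h]; ring

lemma abs_dphi_le (x : ℝ) : |dphi x| ≤ 8 := by
  rcases le_or_gt 1 |x| with h | h
  · rw [dphi_zero x h]; norm_num
  · unfold dphi
    have hm := max_mem01 x
    have h3 : max (1 - x ^ 2) 0 ^ 3 ≤ 1 := by
      calc max (1 - x ^ 2) 0 ^ 3 ≤ 1 ^ 3 := pow_le_pow_left₀ hm.1 hm.2 3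
      _ = 1 := one_pow 3
    have h3' : 0 ≤ max (1 - x ^ 2) 0 ^ 3 := by positivity
    rw [abs_mul, abs_mul]
    have : |(-8 : ℝ)| = 8 := by norm_num
    rw [this, abs_of_nonneg h3']
    nlinarith [abs_nonneg x]

lemma abs_ddphi_le (x : ℝ) : |ddphi x| ≤ 56 := by
  rcases le_or_gt 1 |x| with h | h
  · rw [ddphi_zero x h]; norm_num
  · unfold ddphi
    have hm := max_mem01 x
    have h3 : max (1 - x ^ 2) 0 ^ 3 ≤ 1 := by
      calc max (1 - x ^ 2) 0 ^ 3 ≤ 1 ^ 3 := pow_le_pow_left₀ hm.1 hm.2 3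
      _ = 1 := one_pow 3
    have h2 : max (1 - x ^ 2) 0 ^ 2 ≤ 1 := by
      calc max (1 - x ^ 2) 0 ^ 2 ≤ 1 ^ 2 := pow_le_pow_left₀ hm.1 hm.2 2
      _ = 1 := one_pow 2
    have h3' : 0 ≤ max (1 - x ^ 2) 0 ^ 3 := by positivity
    have h2' : 0 ≤ max (1 - x ^ 2) 0 ^ 2 := by positivity
    have hx2 : x ^ 2 ≤ 1 := by nlinarith [sq_abs x, abs_nonneg x]
    rw [abs_le]
    constructor <;> nlinarith [sq_nonneg x]


noncomputable def esgn (t : ℝ) : ℝ := if 0 ≤ t then 1 else -1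

lemma abs_esgn (t : ℝ) : |esgn t| ≤ 1 := by
  unfold esgn; split <;> norm_num

lemma hasDerivAt_abs' (t : ℝ) (ht : t ≠ 0) : HasDerivAt (fun s : ℝ => |s|) (esgn t) t := by
  rcases lt_or_gt_of_ne ht with h | h
  · have heq : (fun s : ℝ => |s|) =ᶠ[nhds t] fun s => -s := by
      filter_upwards [Iio_mem_nhds h] with s hs
      rw [Set.mem_Iio] at hs
      exact abs_of_neg hs
    have : HasDerivAt (fun s : ℝ => -s) (-1 : ℝ) t := by simpa using (hasDerivAt_id t).fun_neg
    have := this.congr_of_eventuallyEq heq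
    simpa [esgn, not_le.mpr h] using this
  · have heq : (fun s : ℝ => |s|) =ᶠ[nhds t] fun s => s := by
      filter_upwards [Ioi_mem_nhds h] with s hs
      rw [Set.mem_Ioi] at hs
      exact abs_of_pos hs
    have := (hasDerivAt_id t).congr_of_eventuallyEq heq
    simpa [esgn, h.le] using this

lemma hasDerivAt_mulabs (t : ℝ) : HasDerivAt (fun s : ℝ => s * |s|) (2 * |t|) t := by
  rcases lt_trichotomy t 0 with h | h | h
  · have heq : (fun s : ℝ => s * |s|) =ᶠ[nhds t] fun s => -(s * s) := by
      filter_upwards [Iio_mem_nhds h] with s hs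
      rw [Set.mem_Iio] at hs
      rw [abs_of_neg hs]; ring
    have h1 : HasDerivAt (fun s : ℝ => -(s * s)) (-(t + t)) t := by
      simpa using ((hasDerivAt_id t).fun_mul (hasDerivAt_id t)).fun_neg
    have := h1.congr_of_eventuallyEq heq
    have habs : |t| = -t := abs_of_neg h
    exact this.congr_deriv (by rw [habs]; ring)
  · subst h
    rw [hasDerivAt_iff_tendsto_slope]
    simp only [abs_zero, mul_zero]
    apply squeeze_zero_norm' (a := fun s : ℝ => |s|)
    · filter_upwards with s
      rcases eq_or_ne s 0 with rfl | hs
      · simp [slope_def_field]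
      · rw [slope_def_field]
        simp only [mul_zero, abs_zero, zero_mul, sub_zero]
        have he : s * |s| / s = |s| := by
          rw [mul_comm, mul_div_assoc, div_self hs, mul_one]
        rw [he, Real.norm_eq_abs, abs_abs]
    · exact (continuous_abs.tendsto' (0:ℝ) 0 abs_zero).mono_left nhdsWithin_le_nhds
  · have heq : (fun s : ℝ => s * |s|) =ᶠ[nhds t] fun s => s * s := by
      filter_upwards [Ioi_mem_nhds h] with s hs
      rw [Set.mem_Ioi] at hs
      rw [abs_of_pos hs]
    have h1 : HasDerivAt (fun s : ℝ => s * s) (t + t) t := by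
      simpa using (hasDerivAt_id t).fun_mul (hasDerivAt_id t)
    have := h1.congr_of_eventuallyEq heq
    exact this.congr_deriv (by rw [abs_of_pos h]; ring)


noncomputable def Dfun (k : ℕ) (ξ α : Fin k → ℝ) (ν : ℝ) (x : ℝ) : ℝ :=
  1 + ∑ i : Fin k, α i * (2 * |x - ξ i| * phi ((x - ξ i) / ν)
    + (x - ξ i) * |x - ξ i| * dphi ((x - ξ i) / ν) / ν)

noncomputable def Efun (k : ℕ) (ξ α : Fin k → ℝ) (ν : ℝ) (x : ℝ) : ℝ :=
  ∑ i : Fin k, α i * (2 * esgn (x - ξ i) * phi ((x - ξ i) / ν)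
    + 4 * |x - ξ i| * dphi ((x - ξ i) / ν) / ν
    + (x - ξ i) * |x - ξ i| * ddphi ((x - ξ i) / ν) / ν ^ 2)

lemma hasDerivAt_Gfun (k : ℕ) (ξ α : Fin k → ℝ) (ν : ℝ) (x : ℝ) :
    HasDerivAt (Gfun k ξ α ν) (Dfun k ξ α ν x) x := by
  have hGeq : Gfun k ξ α ν = fun x => x + ∑ i : Fin k,
      α i * ((x - ξ i) * |x - ξ i|) * phi ((x - ξ i) / ν) := by
    funext y; unfold Gfun; congr 1; apply Finset.sum_congr rfl; intro i _; ring
  rw [hGeq]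
  have hsum : HasDerivAt (fun y : ℝ => ∑ i : Fin k,
      α i * ((y - ξ i) * |y - ξ i|) * phi ((y - ξ i) / ν))
      (∑ i : Fin k, (α i * (2 * |x - ξ i| * phi ((x - ξ i) / ν)
        + (x - ξ i) * |x - ξ i| * dphi ((x - ξ i) / ν) / ν))) x := by
    apply HasDerivAt.fun_sum
    intro i _
    have hsub : HasDerivAt (fun z : ℝ => z - ξ i) 1 x := (hasDerivAt_id x).sub_const (ξ i)
    have hinner : HasDerivAt (fun z : ℝ => (z - ξ i) / ν) (1 / ν) x := by
      simpa using hsub.div_const ν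
    have hq : HasDerivAt (fun z : ℝ => (z - ξ i) * |z - ξ i|) (2 * |x - ξ i| * 1) x :=
      by have := (hasDerivAt_mulabs (x - ξ i)).comp x hsub; exact this
    have hP : HasDerivAt (fun z : ℝ => phi ((z - ξ i) / ν)) (dphi ((x - ξ i) / ν) * (1 / ν)) x :=
      by have := (hasDerivAt_phi ((x - ξ i) / ν)).comp x hinner; exact this
    have h := ((hq.const_mul (α i)).mul hP)
    exact h.congr_deriv (by ring)
  have := (hasDerivAt_id x).fun_add hsum
  simpa [Dfun] using this

lemma hasDerivAt_Dfun (k : ℕ) (ξ α : Fin k → ℝ) (ν : ℝ) (x : ℝ)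
    (hx : ∀ i : Fin k, x ≠ ξ i) :
    HasDerivAt (Dfun k ξ α ν) (Efun k ξ α ν x) x := by
  have hDeq : Dfun k ξ α ν = fun y => 1 + ∑ i : Fin k,
      α i * (2 * |y - ξ i| * phi ((y - ξ i) / ν)
        + (y - ξ i) * |y - ξ i| * dphi ((y - ξ i) / ν) / ν) := rfl
  rw [hDeq]
  have hsum : HasDerivAt (fun y : ℝ => ∑ i : Fin k,
      α i * (2 * |y - ξ i| * phi ((y - ξ i) / ν)
        + (y - ξ i) * |y - ξ i| * dphi ((y - ξ i) / ν) / ν))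
      (Efun k ξ α ν x) x := by
    unfold Efun
    apply HasDerivAt.fun_sum
    intro i _
    have ht : x - ξ i ≠ 0 := sub_ne_zero.mpr (hx i)
    have hsub : HasDerivAt (fun z : ℝ => z - ξ i) 1 x := (hasDerivAt_id x).sub_const (ξ i)
    have hinner : HasDerivAt (fun z : ℝ => (z - ξ i) / ν) (1 / ν) x := by
      simpa using hsub.div_const ν
    have hA : HasDerivAt (fun z : ℝ => |z - ξ i|) (esgn (x - ξ i) * 1) x :=
      by have := (hasDerivAt_abs' (x - ξ i) ht).comp x hsub; exact this
    have hB : HasDerivAt (fun z : ℝ => (z - ξ i) * |z - ξ i|) (2 * |x - ξ i| * 1) x :=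
      by have := (hasDerivAt_mulabs (x - ξ i)).comp x hsub; exact this
    have hP : HasDerivAt (fun z : ℝ => phi ((z - ξ i) / ν)) (dphi ((x - ξ i) / ν) * (1 / ν)) x :=
      by have := (hasDerivAt_phi ((x - ξ i) / ν)).comp x hinner; exact this
    have hQ : HasDerivAt (fun z : ℝ => dphi ((z - ξ i) / ν)) (ddphi ((x - ξ i) / ν) * (1 / ν)) x :=
      by have := (hasDerivAt_dphi ((x - ξ i) / ν)).comp x hinner; exact this
    have h := (((hA.const_mul 2).mul hP).add ((hB.mul hQ).div_const ν)).const_mul (α i)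
    exact h.congr_deriv (by ring)
  have := (hasDerivAt_const x (1:ℝ)).fun_add hsum
  simpa using this


section bounds
variable {k : ℕ} {ξ α : Fin k → ℝ} {ν : ℝ}

lemma one_le_abs_div {t : ℝ} (hν0 : 0 < ν) (h : ν ≤ |t|) : 1 ≤ |t / ν| := by
  rw [abs_div, abs_of_pos hν0, le_div_iff₀ hν0, one_mul]
  exact h

lemma Gfun_far (hν0 : 0 < ν) (x : ℝ) (h : ∀ i : Fin k, ν ≤ |x - ξ i|) : Gfun k ξ α ν x = x := by
  unfold Gfun
  rw [Finset.sum_eq_zero, add_zero]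
  intro i _
  rw [phi_zero _ (one_le_abs_div hν0 (h i)), mul_zero]

lemma Dfun_far (hν0 : 0 < ν) (x : ℝ) (h : ∀ i : Fin k, ν ≤ |x - ξ i|) : Dfun k ξ α ν x = 1 := by
  unfold Dfun
  rw [Finset.sum_eq_zero, add_zero]
  intro i _
  rw [phi_zero _ (one_le_abs_div hν0 (h i)), dphi_zero _ (one_le_abs_div hν0 (h i))]
  ring

lemma Efun_far (hν0 : 0 < ν) (x : ℝ) (h : ∀ i : Fin k, ν ≤ |x - ξ i|) : Efun k ξ α ν x = 0 := by
  unfold Efun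
  apply Finset.sum_eq_zero
  intro i _
  rw [phi_zero _ (one_le_abs_div hν0 (h i)), dphi_zero _ (one_le_abs_div hν0 (h i)),
    ddphi_zero _ (one_le_abs_div hν0 (h i))]
  ring

lemma abs_Gfun_sub (hν0 : 0 < ν) (hν1 : ∀ i : Fin k, ν * (8 * |α i|) < 1) (x : ℝ) :
    |Gfun k ξ α ν x - x| ≤ k * ν := by
  unfold Gfun
  rw [add_sub_cancel_left]
  calc |∑ i : Fin k, α i * (x - ξ i) * |x - ξ i| * phi ((x - ξ i) / ν)|
      ≤ ∑ i : Fin k, |α i * (x - ξ i) * |x - ξ i| * phi ((x - ξ i) / ν)| :=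
        Finset.abs_sum_le_sum_abs _ _
    _ ≤ ∑ _i : Fin k, ν := by
        apply Finset.sum_le_sum
        intro i _
        set t := x - ξ i with ht
        rcases le_or_gt ν |t| with hc | hc
        · rw [phi_zero _ (one_le_abs_div hν0 hc), mul_zero, abs_zero]
          exact hν0.le
        · have hαν : |α i| * ν ≤ 1 / 8 := by nlinarith [hν1 i, abs_nonneg (α i)]
          have h1 : |α i * t * |t| * phi (t / ν)| ≤ |α i| * ν * ν := by
            rw [abs_mul, abs_mul, abs_mul, abs_abs]
            have hp0 := phi_nonneg (t / ν)
            have hp1 := phi_le_one (t / ν)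
            have h01 : |phi (t / ν)| ≤ 1 := by rw [abs_of_nonneg hp0]; exact hp1
            calc |α i| * |t| * |t| * |phi (t / ν)| ≤ |α i| * |t| * |t| * 1 := by
                  exact mul_le_mul_of_nonneg_left h01
                    (mul_nonneg (mul_nonneg (abs_nonneg _) (abs_nonneg _)) (abs_nonneg _))
              _ = |α i| * |t| * |t| := by ring
              _ ≤ |α i| * ν * ν := by
                  apply mul_le_mul (mul_le_mul_of_nonneg_left hc.le (abs_nonneg _)) hc.le
                    (abs_nonneg _) (by positivity)
          calc |α i * t * |t| * phi (t / ν)| ≤ |α i| * ν * ν := h1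
            _ ≤ 1 / 8 * ν := by nlinarith [hν0]
            _ ≤ ν := by nlinarith [hν0]
    _ = k * ν := by simp [Finset.card_univ, mul_comm]

lemma abs_Dfun_le (hν0 : 0 < ν) (hν1 : ∀ i : Fin k, ν * (8 * |α i|) < 1) (x : ℝ) :
    |Dfun k ξ α ν x| ≤ 1 + 2 * k := by
  unfold Dfun
  calc |1 + ∑ i : Fin k, α i * (2 * |x - ξ i| * phi ((x - ξ i) / ν)
        + (x - ξ i) * |x - ξ i| * dphi ((x - ξ i) / ν) / ν)|
      ≤ |(1:ℝ)| + |∑ i : Fin k, α i * (2 * |x - ξ i| * phi ((x - ξ i) / ν)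
        + (x - ξ i) * |x - ξ i| * dphi ((x - ξ i) / ν) / ν)| := abs_add_le _ _
    _ ≤ 1 + ∑ i : Fin k, |α i * (2 * |x - ξ i| * phi ((x - ξ i) / ν)
        + (x - ξ i) * |x - ξ i| * dphi ((x - ξ i) / ν) / ν)| := by
        rw [abs_one]
        exact add_le_add_right (Finset.abs_sum_le_sum_abs _ _) 1
    _ ≤ 1 + ∑ _i : Fin k, 2 := by
        apply add_le_add_right
        apply Finset.sum_le_sum
        intro i _
        set t := x - ξ i with ht
        rcases le_or_gt ν |t| with hc | hc
        · rw [phi_zero _ (one_le_abs_div hν0 hc), dphi_zero _ (one_le_abs_div hν0 hc)]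
          simp
        · have hαν : |α i| * ν ≤ 1 / 8 := by nlinarith [hν1 i, abs_nonneg (α i)]
          rw [abs_mul]
          have hb : |2 * |t| * phi (t / ν) + t * |t| * dphi (t / ν) / ν| ≤ 10 * ν := by
            have h1 : |2 * |t| * phi (t / ν)| ≤ 2 * ν := by
              rw [abs_mul, abs_mul, abs_abs]
              have h01 : |phi (t / ν)| ≤ 1 := by
                rw [abs_of_nonneg (phi_nonneg _)]; exact phi_le_one _
              have : |(2:ℝ)| = 2 := by norm_num
              rw [this]
              nlinarith [abs_nonneg t]
            have h2 : |t * |t| * dphi (t / ν) / ν| ≤ 8 * ν := by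
              rw [abs_div, abs_mul, abs_mul, abs_abs, abs_of_pos hν0, div_le_iff₀ hν0]
              nlinarith [abs_dphi_le (t / ν), abs_nonneg t, abs_nonneg (dphi (t / ν))]
            calc _ ≤ |2 * |t| * phi (t / ν)| + |t * |t| * dphi (t / ν) / ν| := abs_add_le _ _
              _ ≤ 2 * ν + 8 * ν := add_le_add h1 h2
              _ = 10 * ν := by ring
          calc |α i| * |2 * |t| * phi (t / ν) + t * |t| * dphi (t / ν) / ν|
              ≤ |α i| * (10 * ν) := mul_le_mul_of_nonneg_left hb (abs_nonneg _)
            _ ≤ 2 := by nlinarith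
    _ = 1 + 2 * k := by simp [Finset.card_univ, mul_comm]

lemma abs_Efun_le (hν0 : 0 < ν) (hν1 : ∀ i : Fin k, ν * (8 * |α i|) < 1) (x : ℝ) :
    |Efun k ξ α ν x| ≤ 12 * k / ν := by
  unfold Efun
  calc |∑ i : Fin k, α i * (2 * esgn (x - ξ i) * phi ((x - ξ i) / ν)
        + 4 * |x - ξ i| * dphi ((x - ξ i) / ν) / ν
        + (x - ξ i) * |x - ξ i| * ddphi ((x - ξ i) / ν) / ν ^ 2)|
      ≤ ∑ i : Fin k, |α i * (2 * esgn (x - ξ i) * phi ((x - ξ i) / ν)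
        + 4 * |x - ξ i| * dphi ((x - ξ i) / ν) / ν
        + (x - ξ i) * |x - ξ i| * ddphi ((x - ξ i) / ν) / ν ^ 2)| :=
        Finset.abs_sum_le_sum_abs _ _
    _ ≤ ∑ _i : Fin k, 12 / ν := by
        apply Finset.sum_le_sum
        intro i _
        set t := x - ξ i with ht
        rcases le_or_gt ν |t| with hc | hc
        · rw [phi_zero _ (one_le_abs_div hν0 hc), dphi_zero _ (one_le_abs_div hν0 hc),
            ddphi_zero _ (one_le_abs_div hν0 hc)]
          simp
          positivity
        · have hαν : |α i| * ν ≤ 1 / 8 := by nlinarith [hν1 i, abs_nonneg (α i)]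
          rw [abs_mul]
          have hb : |2 * esgn t * phi (t / ν) + 4 * |t| * dphi (t / ν) / ν
              + t * |t| * ddphi (t / ν) / ν ^ 2| ≤ 90 := by
            have h1 : |2 * esgn t * phi (t / ν)| ≤ 2 := by
              rw [abs_mul, abs_mul]
              have h01 : |phi (t / ν)| ≤ 1 := by
                rw [abs_of_nonneg (phi_nonneg _)]; exact phi_le_one _
              have : |(2:ℝ)| = 2 := by norm_num
              rw [this]
              nlinarith [abs_esgn t, abs_nonneg (esgn t), abs_nonneg (phi (t / ν))]
            have h2 : |4 * |t| * dphi (t / ν) / ν| ≤ 32 := by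
              rw [abs_div, abs_mul, abs_mul, abs_abs, abs_of_pos hν0, div_le_iff₀ hν0]
              have h4 : |(4:ℝ)| = 4 := by norm_num
              rw [h4]
              nlinarith [abs_dphi_le (t / ν), abs_nonneg t, abs_nonneg (dphi (t / ν))]
            have h3 : |t * |t| * ddphi (t / ν) / ν ^ 2| ≤ 56 := by
              rw [abs_div, abs_mul, abs_mul, abs_abs, abs_pow, abs_of_pos hν0,
                div_le_iff₀ (by positivity : (0:ℝ) < ν ^ 2)]
              nlinarith [abs_ddphi_le (t / ν), abs_nonneg t, abs_nonneg (ddphi (t / ν))]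
            calc _ ≤ |2 * esgn t * phi (t / ν) + 4 * |t| * dphi (t / ν) / ν|
                  + |t * |t| * ddphi (t / ν) / ν ^ 2| := abs_add_le _ _
              _ ≤ (|2 * esgn t * phi (t / ν)| + |4 * |t| * dphi (t / ν) / ν|)
                  + |t * |t| * ddphi (t / ν) / ν ^ 2| := by
                    exact add_le_add_left (abs_add_le _ _) _
              _ ≤ 90 := by linarith
          calc |α i| * |2 * esgn t * phi (t / ν) + 4 * |t| * dphi (t / ν) / ν
              + t * |t| * ddphi (t / ν) / ν ^ 2|
              ≤ |α i| * 90 := mul_le_mul_of_nonneg_left hb (abs_nonneg _)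
            _ ≤ 12 / ν := by
                rw [le_div_iff₀ hν0]
                nlinarith
    _ = 12 * k / ν := by
        rw [Finset.sum_const, Finset.card_univ, Fintype.card_fin, nsmul_eq_mul]
        ring

end bounds

set_option maxHeartbeats 2000000 in
/-- Under (A1)-(A4), the transformed coefficients `μ̃` and `σ̃` satisfy
the coercivity condition (A1). -/
theorem stmt_8 (p₀ p₁ ℓμ ℓσ : ℝ) (hp₀ : 2 ≤ p₀) (hp₁ : 2 ≤ p₁)
    (hℓμ : 0 < ℓμ) (hℓσ0 : 0 ≤ ℓσ) (hℓσ : ℓσ ≤ ℓμ / 2)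
    (μ σ : ℝ → ℝ)
    -- (A1)
    (c₁ : ℝ) (hc₁ : 0 < c₁)
    (hA1 : ∀ x : ℝ, 2 * x * μ x + (p₀ - 1) * (σ x) ^ 2 ≤ c₁ * (1 + x ^ 2))
    -- (A2): discontinuity points ξ₁ < … < ξ_k, k ≥ 1
    (c₂ : ℝ) (hc₂ : 0 < c₂) (k : ℕ) (hk : 1 ≤ k) (ξ : Fin k → ℝ) (hξ : StrictMono ξ)
    (hA2i : ∀ i : Fin (k + 1), ∀ x ∈ piece k ξ i, ∀ y ∈ piece k ξ i,
      2 * (x - y) * (μ x - μ y) + (p₁ - 1) * (σ x - σ y) ^ 2 ≤ c₂ * |x - y| ^ 2)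
    (hA2ii : ∀ i : Fin (k + 1), ∀ x ∈ piece k ξ i, ∀ y ∈ piece k ξ i,
      |μ x - μ y| ≤ c₂ * (1 + |x| ^ ℓμ + |y| ^ ℓμ) * |x - y|)
    -- (A3)
    (c₃ : ℝ) (hc₃ : 0 < c₃)
    (hA3 : ∀ x y : ℝ, |σ x - σ y| ≤ c₃ * (1 + |x| ^ ℓσ + |y| ^ ℓσ) * |x - y|)
    -- (A4)
    (hA4 : ∀ i : Fin k, σ (ξ i) ≠ 0)
    -- one-sided limits μ(ξ_i-) and μ(ξ_i+)
    (μm μp : Fin k → ℝ)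
    (hμm : ∀ i : Fin k, Filter.Tendsto μ (nhdsWithin (ξ i) (Set.Iio (ξ i))) (nhds (μm i)))
    (hμp : ∀ i : Fin k, Filter.Tendsto μ (nhdsWithin (ξ i) (Set.Ioi (ξ i))) (nhds (μp i)))
    -- α_i = (μ(ξ_i-) - μ(ξ_i+)) / (2 σ(ξ_i)²)
    (α : Fin k → ℝ) (hα : ∀ i : Fin k, α i = (μm i - μp i) / (2 * (σ (ξ i)) ^ 2))
    -- ν ∈ (0, ρ_{ξ,α}):  ν·8|α_i| < 1 encodes ν < 1/(8|α_i|) with the convention 1/0 = ∞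
    (ν : ℝ) (hν0 : 0 < ν)
    (hν1 : ∀ i : Fin k, ν * (8 * |α i|) < 1)
    (hν2 : ∀ i j : Fin k, (i : ℕ) + 1 = (j : ℕ) → ν < (ξ j - ξ i) / 2)
    -- G is differentiable with derivative G'; G' is differentiable off the points ξ_i
    -- with derivative G'', extended to the points ξ_i by the prescribed formula
    (G' G'' Ginv : ℝ → ℝ)
    (hG' : ∀ x : ℝ, HasDerivAt (Gfun k ξ α ν) (G' x) x)
    (hG''a : ∀ x : ℝ, (∀ i : Fin k, x ≠ ξ i) → HasDerivAt G' (G'' x) x)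
    (hG''b : ∀ i : Fin k, G'' (ξ i) = 2 * α i + 2 * (μp i - μ (ξ i)) / (σ (ξ i)) ^ 2)
    -- Ginv is the inverse of the bijection G
    (hGinv1 : ∀ x : ℝ, Ginv (Gfun k ξ α ν x) = x)
    (hGinv2 : ∀ x : ℝ, Gfun k ξ α ν (Ginv x) = x) :
    -- μ̃ = (G'·μ + ½·G''·σ²) ∘ G⁻¹  and  σ̃ = (G'·σ) ∘ G⁻¹
    ∃ c : ℝ, 0 < c ∧ ∀ x : ℝ,
      2 * x * (G' (Ginv x) * μ (Ginv x) + (1 / 2) * G'' (Ginv x) * (σ (Ginv x)) ^ 2)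
        + (p₀ - 1) * (G' (Ginv x) * σ (Ginv x)) ^ 2 ≤ c * (1 + x ^ 2) := by
  -- identify G' and G'' with the explicit formulas
  have hDG : ∀ z : ℝ, G' z = Dfun k ξ α ν z := fun z =>
    (hG' z).unique (hasDerivAt_Gfun k ξ α ν z)
  have hG'fun : G' = Dfun k ξ α ν := funext hDG
  have hEG : ∀ z : ℝ, (∀ i : Fin k, z ≠ ξ i) → G'' z = Efun k ξ α ν z := by
    intro z hz
    have h1 : HasDerivAt G' (Efun k ξ α ν z) z := by
      rw [hG'fun]; exact hasDerivAt_Dfun k ξ α ν z hz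
    exact (hG''a z hz).unique h1
  -- constants
  set M : ℝ := (∑ j : Fin k, |ξ j|) + ν with hM
  set M' : ℝ := M + k * ν with hM'
  set B1 : ℝ := 1 + 2 * (k : ℝ) with hB1
  set BG2 : ℝ := ∑ j : Fin k, |G'' (ξ j)| with hBG2
  set B2 : ℝ := 12 * k / ν + BG2 with hB2
  set Bb : ℝ := ∑ j : Fin k, (|μ (ξ j)| + |μ (ξ j + ν)| + |μ (ξ j - ν)|) with hBb
  set Bμ : ℝ := Bb + c₂ * (1 + 2 * M ^ ℓμ) * (2 * ν) with hBμ
  set Bσ : ℝ := |σ 0| + c₃ * (2 + M ^ ℓσ) * M with hBσ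
  have hξsum : 0 ≤ ∑ j : Fin k, |ξ j| := Finset.sum_nonneg fun j _ => abs_nonneg _
  have hM0 : 0 < M := by rw [hM]; linarith
  have hM'0 : 0 < M' := by rw [hM']; positivity
  have hB10 : (0:ℝ) < B1 := by rw [hB1]; positivity
  have hBG20 : 0 ≤ BG2 := Finset.sum_nonneg fun j _ => abs_nonneg _
  have hB20 : 0 ≤ B2 := by rw [hB2]; positivity
  have hMℓμ : 0 ≤ M ^ ℓμ := Real.rpow_nonneg hM0.le _
  have hMℓσ : 0 ≤ M ^ ℓσ := Real.rpow_nonneg hM0.le _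
  have hBb0 : 0 ≤ Bb := Finset.sum_nonneg fun j _ => by positivity
  have hBμ0 : 0 ≤ Bμ := by rw [hBμ]; positivity
  have hBσ0 : 0 ≤ Bσ := by rw [hBσ]; positivity
  set C : ℝ := 2 * (M' * (B1 * Bμ)) + M' * (B2 * Bσ ^ 2) + (p₀ - 1) * (B1 * Bσ) ^ 2 with hC
  have hp₀1 : (0:ℝ) ≤ p₀ - 1 := by linarith
  have hC0 : 0 ≤ C := by rw [hC]; positivity
  clear_value M M' B1 BG2 B2 Bb Bμ Bσ C
  refine ⟨c₁ + C, by linarith, ?_⟩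
  intro x
  set y : ℝ := Ginv x with hy
  have hxy : Gfun k ξ α ν y = x := hGinv2 x
  clear_value y
  by_cases hfar : ∀ i : Fin k, ν ≤ |y - ξ i|
  · -- far from all discontinuities: reduces to (A1) for μ, σ
    have hx : x = y := by rw [← hxy, Gfun_far hν0 y hfar]
    have hG'1 : G' y = 1 := by rw [hDG y, Dfun_far hν0 y hfar]
    have hne : ∀ i : Fin k, y ≠ ξ i := by
      intro i h
      have := hfar i
      rw [h, sub_self, abs_zero] at this
      linarith
    have hG''0 : G'' y = 0 := by rw [hEG y hne, Efun_far hν0 y hfar]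
    rw [hG'1, hG''0, hx]
    have h1 := hA1 y
    have h3 : 0 ≤ C * (1 + y ^ 2) := mul_nonneg hC0 (by positivity)
    have h4 : (c₁ + C) * (1 + y ^ 2) = c₁ * (1 + y ^ 2) + C * (1 + y ^ 2) := by ring
    linarith
  · -- near a discontinuity point ξ i
    push_neg at hfar
    obtain ⟨i, hi⟩ := hfar
    have hξi : |ξ i| ≤ ∑ j : Fin k, |ξ j| :=
      Finset.single_le_sum (f := fun j => |ξ j|) (fun j _ => abs_nonneg _) (Finset.mem_univ i)
    have hyM : |y| ≤ M := by
      have : |y| ≤ |ξ i| + |y - ξ i| := by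
        calc |y| = |ξ i + (y - ξ i)| := by ring_nf
          _ ≤ |ξ i| + |y - ξ i| := abs_add_le _ _
      rw [hM]; linarith
    have hxM : |x| ≤ M' := by
      rw [← hxy, hM']
      have h1 := abs_Gfun_sub hν0 hν1 (ξ := ξ) y
      have h2 : |Gfun k ξ α ν y| ≤ |Gfun k ξ α ν y - y| + |y| := by
        calc |Gfun k ξ α ν y| = |(Gfun k ξ α ν y - y) + y| := by ring_nf
          _ ≤ |Gfun k ξ α ν y - y| + |y| := abs_add_le _ _
      linarith
    have hG'b : |G' y| ≤ B1 := by rw [hDG y, hB1]; exact abs_Dfun_le hν0 hν1 y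
    have hG''bd : |G'' y| ≤ B2 := by
      by_cases hzy : ∀ j : Fin k, y ≠ ξ j
      · rw [hEG y hzy, hB2]
        have := abs_Efun_le hν0 hν1 (ξ := ξ) y
        linarith
      · push_neg at hzy
        obtain ⟨j, hj⟩ := hzy
        rw [hj, hB2]
        have : |G'' (ξ j)| ≤ BG2 := by
          rw [hBG2]
          exact Finset.single_le_sum (f := fun j => |G'' (ξ j)|) (fun j _ => abs_nonneg _)
            (Finset.mem_univ j)
        have h12 : 0 ≤ 12 * (k:ℝ) / ν := by positivity
        linarith
    have hσb : |σ y| ≤ Bσ := by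
      have h1 := hA3 y 0
      have h2 : |(0:ℝ)| ^ ℓσ ≤ 1 := Real.rpow_le_one (by simp) (by simp) hℓσ0
      have h3 : |y| ^ ℓσ ≤ M ^ ℓσ := Real.rpow_le_rpow (abs_nonneg y) hyM hℓσ0
      have h4 : |σ y| - |σ 0| ≤ |σ y - σ 0| := abs_sub_abs_le_abs_sub _ _
      have h5 : 1 + |y| ^ ℓσ + |(0:ℝ)| ^ ℓσ ≤ 2 + M ^ ℓσ := by linarith
      have h6 : |y - 0| ≤ M := by rw [sub_zero]; exact hyM
      have h7 : c₃ * (1 + |y| ^ ℓσ + |(0:ℝ)| ^ ℓσ) * |y - 0| ≤ c₃ * (2 + M ^ ℓσ) * M := by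
        apply mul_le_mul (mul_le_mul_of_nonneg_left h5 hc₃.le) h6 (abs_nonneg _)
        positivity
      rw [hBσ]; linarith
    -- bound |μ y|
    have hμsum : ∀ j : Fin k, |μ (ξ j)| + |μ (ξ j + ν)| + |μ (ξ j - ν)| ≤ Bb := by
      intro j
      rw [hBb]
      exact Finset.single_le_sum (f := fun j => |μ (ξ j)| + |μ (ξ j + ν)| + |μ (ξ j - ν)|)
        (fun j _ => by positivity) (Finset.mem_univ j)
    have hrpowμ : ∀ z : ℝ, |z| ≤ M → |z| ^ ℓμ ≤ M ^ ℓμ := fun z hz =>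
      Real.rpow_le_rpow (abs_nonneg z) hz hℓμ.le
    have hbnd : ∀ (I : Fin (k + 1)) (r : ℝ), y ∈ piece k ξ I → r ∈ piece k ξ I →
        |r| ≤ M → |y - r| ≤ 2 * ν → |μ y| ≤ |μ r| + c₂ * (1 + 2 * M ^ ℓμ) * (2 * ν) := by
      intro I r hyp hrp hrM hyr
      have h := hA2ii I y hyp r hrp
      have h1 : 1 + |y| ^ ℓμ + |r| ^ ℓμ ≤ 1 + 2 * M ^ ℓμ := by
        linarith [hrpowμ y hyM, hrpowμ r hrM]
      have h7 : c₂ * (1 + |y| ^ ℓμ + |r| ^ ℓμ) * |y - r| ≤ c₂ * (1 + 2 * M ^ ℓμ) * (2 * ν) := by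
        apply mul_le_mul (mul_le_mul_of_nonneg_left h1 hc₂.le) hyr (abs_nonneg _)
        positivity
      have h8 : |μ y| - |μ r| ≤ |μ y - μ r| := abs_sub_abs_le_abs_sub _ _
      linarith
    have hμb : |μ y| ≤ Bμ := by
      rcases lt_trichotomy y (ξ i) with hlt | heq | hgt
      · -- y < ξ i : use piece i.castSucc with reference point ξ i - ν
        have hylow : ξ i - ν < y := by
          have := abs_lt.mp hi
          linarith [this.1]
        have hlo : ∀ j : Fin k, (j : ℕ) < (i : ℕ) → ξ j < ξ i - 2 * ν := by
          intro j hj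
          have hi1 : 1 ≤ (i : ℕ) := by omega
          have hik : (i : ℕ) - 1 < k := by omega
          set j' : Fin k := ⟨(i : ℕ) - 1, hik⟩ with hj'
          have hν2' := hν2 j' i (by simp [hj']; omega)
          have hmon : ξ j ≤ ξ j' := hξ.monotone (by rw [Fin.le_def]; simp [hj']; omega)
          linarith
        have hmem : ∀ z : ℝ, ξ i - ν ≤ z → z < ξ i → z ∈ piece k ξ i.castSucc := by
          intro z hz1 hz2
          constructor
          · intro j hj
            rw [Fin.coe_castSucc] at hj
            have := hlo j hj
            linarith
          · intro j hj
            rw [Fin.coe_castSucc] at hj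
            have : ξ i ≤ ξ j := hξ.monotone (by rw [Fin.le_def]; omega)
            linarith
        have hmy : y ∈ piece k ξ i.castSucc := hmem y hylow.le hlt
        have hmr : ξ i - ν ∈ piece k ξ i.castSucc := hmem (ξ i - ν) le_rfl (by linarith)
        have hrM : |ξ i - ν| ≤ M := by
          rw [abs_le]; rw [hM]
          constructor
          · have := abs_le.mp (le_refl |ξ i|)
            have h := neg_abs_le (ξ i)
            linarith
          · have h := le_abs_self (ξ i)
            linarith
        have hyr : |y - (ξ i - ν)| ≤ 2 * ν := by
          rw [abs_le]; constructor <;> linarith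
        have := hbnd i.castSucc (ξ i - ν) hmy hmr hrM hyr
        have hr : |μ (ξ i - ν)| ≤ Bb := by
          have := hμsum i
          have h1 := abs_nonneg (μ (ξ i))
          have h2 := abs_nonneg (μ (ξ i + ν))
          linarith
        rw [hBμ]; linarith
      · -- y = ξ i
        have hr : |μ y| ≤ Bb := by
          rw [heq]
          have := hμsum i
          have h1 := abs_nonneg (μ (ξ i + ν))
          have h2 := abs_nonneg (μ (ξ i - ν))
          linarith
        have : 0 ≤ c₂ * (1 + 2 * M ^ ℓμ) * (2 * ν) := by positivity
        rw [hBμ]; linarith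
      · -- ξ i < y : use piece i.succ with reference point ξ i + ν
        have hyhigh : y < ξ i + ν := by
          have := abs_lt.mp hi
          linarith [this.2]
        have hup : ∀ j : Fin k, (i : ℕ) + 1 ≤ (j : ℕ) → ξ i + 2 * ν < ξ j := by
          intro j hj
          have hik : (i : ℕ) + 1 < k := by omega
          set j' : Fin k := ⟨(i : ℕ) + 1, hik⟩ with hj'
          have hν2' := hν2 i j' (by simp [hj'])
          have hmon : ξ j' ≤ ξ j := hξ.monotone (by rw [Fin.le_def]; simp [hj']; omega)
          linarith
        have hmem : ∀ z : ℝ, ξ i < z → z ≤ ξ i + ν → z ∈ piece k ξ i.succ := by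
          intro z hz1 hz2
          constructor
          · intro j hj
            rw [Fin.val_succ] at hj
            have : ξ j ≤ ξ i := hξ.monotone (by rw [Fin.le_def]; omega)
            linarith
          · intro j hj
            rw [Fin.val_succ] at hj
            have := hup j hj
            linarith
        have hmy : y ∈ piece k ξ i.succ := hmem y hgt hyhigh.le
        have hmr : ξ i + ν ∈ piece k ξ i.succ := hmem (ξ i + ν) (by linarith) le_rfl
        have hrM : |ξ i + ν| ≤ M := by
          rw [abs_le]; rw [hM]
          constructor
          · have h := neg_abs_le (ξ i)
            linarith
          · have h := le_abs_self (ξ i)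
            linarith
        have hyr : |y - (ξ i + ν)| ≤ 2 * ν := by
          rw [abs_le]; constructor <;> linarith
        have := hbnd i.succ (ξ i + ν) hmy hmr hrM hyr
        have hr : |μ (ξ i + ν)| ≤ Bb := by
          have := hμsum i
          have h1 := abs_nonneg (μ (ξ i))
          have h2 := abs_nonneg (μ (ξ i - ν))
          linarith
        rw [hBμ]; linarith
    -- assemble
    have hσ2 : |σ y ^ 2| ≤ Bσ ^ 2 := by
      rw [abs_pow]
      exact pow_le_pow_left₀ (abs_nonneg _) hσb 2
    have e1 : 2 * (x * (G' y * μ y)) ≤ 2 * (M' * (B1 * Bμ)) := by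
      have h := prod2_le hxM (prod2_le hG'b hμb)
      linarith [le_abs_self (x * (G' y * μ y))]
    have e2 : x * (G'' y * σ y ^ 2) ≤ M' * (B2 * Bσ ^ 2) := by
      have h := prod2_le hxM (prod2_le hG''bd hσ2)
      linarith [le_abs_self (x * (G'' y * σ y ^ 2))]
    have e3 : (p₀ - 1) * (G' y * σ y) ^ 2 ≤ (p₀ - 1) * (B1 * Bσ) ^ 2 := by
      apply mul_le_mul_of_nonneg_left _ hp₀1
      have h1 : |G' y * σ y| ≤ B1 * Bσ := prod2_le hG'b hσb
      calc (G' y * σ y) ^ 2 = |G' y * σ y| ^ 2 := (sq_abs _).symm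
        _ ≤ (B1 * Bσ) ^ 2 := pow_le_pow_left₀ (abs_nonneg _) h1 2
    have hexp : 2 * x * (G' y * μ y + 1 / 2 * G'' y * σ y ^ 2) + (p₀ - 1) * (G' y * σ y) ^ 2
        = 2 * (x * (G' y * μ y)) + x * (G'' y * σ y ^ 2) + (p₀ - 1) * (G' y * σ y) ^ 2 := by
      ring
    have hCle : C ≤ (c₁ + C) * (1 + x ^ 2) := by
      have h1 : (c₁ + C) * (1 + x ^ 2) - C = c₁ * (1 + x ^ 2) + C * x ^ 2 := by ring
      have h2 : 0 ≤ c₁ * (1 + x ^ 2) := mul_nonneg hc₁.le (by positivity)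
      have h3 : 0 ≤ C * x ^ 2 := mul_nonneg hC0 (sq_nonneg x)
      linarith
    rw [hexp]
    have : 2 * (x * (G' y * μ y)) + x * (G'' y * σ y ^ 2) + (p₀ - 1) * (G' y * σ y) ^ 2 ≤ C := by
      rw [hC]; linarith
    linarith
end

section
/- Assume μ, σ : ℝ → ℝ satisfy conditions (A2)(ii) and (A3) with parameters ℓ_μ ∈ (0,∞) and ℓ_σ ∈ [0, ℓ_μ/2]. Then there exists c ∈ (0,∞) such that for all n ∈ ℕ with n ≥ 1 and all x ∈ ℝ, the tamed coefficients satisfy σ_n(x)² ≤ c·min(√n·(1+x²), σ(x)²) and |μ_n(x)| ≤ c·min(√n·(1+|x|), |μ(x)|). -/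
/-- The tamed coefficient `f_n(x) = f(x) / (1 + n^{-1/2} |x|^ℓ)`. -/
noncomputable def tame (f : ℝ → ℝ) (ℓ : ℝ) (n : ℕ) (x : ℝ) : ℝ :=
  f x / (1 + (1 / Real.sqrt (n : ℝ)) * |x| ^ ℓ)

lemma aux_one_le (x e : ℝ) : (1:ℝ) ≤ 1 + |x| ^ e := by
  have := Real.rpow_nonneg (abs_nonneg x) e; linarith

lemma aux_abs_le (x e : ℝ) (he : 1 ≤ e) : |x| ≤ 1 + |x| ^ e := by
  rcases le_or_gt (|x|) 1 with h | h
  · have := Real.rpow_nonneg (abs_nonneg x) e; linarith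
  · have h2 : |x| ^ (1:ℝ) ≤ |x| ^ e := Real.rpow_le_rpow_of_exponent_le h.le he
    rw [Real.rpow_one] at h2; linarith

lemma aux_rpow_le (x e ℓ : ℝ) (hℓ : 0 ≤ ℓ) (h : ℓ ≤ e) : |x| ^ ℓ ≤ 1 + |x| ^ e := by
  rcases le_or_gt (|x|) 1 with hx | hx
  · have h1 : |x| ^ ℓ ≤ 1 := Real.rpow_le_one (abs_nonneg x) hx hℓ
    have := Real.rpow_nonneg (abs_nonneg x) e; linarith
  · have h2 : |x| ^ ℓ ≤ |x| ^ e := Real.rpow_le_rpow_of_exponent_le hx.le h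
    linarith

lemma aux_mul_le (x e ℓ : ℝ) (hℓ : 0 ≤ ℓ) (h : ℓ + 1 ≤ e) : |x| ^ ℓ * |x| ≤ 1 + |x| ^ e := by
  rcases le_or_gt (|x|) 1 with hx | hx
  · have h1 : |x| ^ ℓ ≤ 1 := Real.rpow_le_one (abs_nonneg x) hx hℓ
    have h0 : (0:ℝ) ≤ |x| ^ ℓ := Real.rpow_nonneg (abs_nonneg x) ℓ
    have := Real.rpow_nonneg (abs_nonneg x) e
    nlinarith [abs_nonneg x]
  · have hne : |x| ≠ 0 := by positivity
    have h1 : |x| ^ ℓ * |x| = |x| ^ (ℓ + 1) := (Real.rpow_add_one hne ℓ).symm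
    have h2 : |x| ^ (ℓ+1) ≤ |x| ^ e := Real.rpow_le_rpow_of_exponent_le hx.le h
    rw [h1]; linarith

lemma rpow_succ_abs (x ℓ : ℝ) (hℓ : 0 ≤ ℓ) : |x| ^ (ℓ + 1) = |x| ^ ℓ * |x| := by
  rcases eq_or_ne x 0 with rfl | hx
  · rw [abs_zero, Real.zero_rpow (by linarith : ℓ + 1 ≠ 0), mul_zero]
  · exact Real.rpow_add_one (abs_ne_zero.mpr hx) ℓ

lemma cover (k : ℕ) (ξ : Fin k → ℝ) (hξ : StrictMono ξ) (x : ℝ) (hx : ∀ j, x ≠ ξ j) :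
    ∃ i, x ∈ piece k ξ i := by
  classical
  set s := Finset.univ.filter (fun j : Fin k => ξ j < x) with hs
  have hcard : s.card ≤ k := le_trans (Finset.card_filter_le _ _) (by simp)
  refine ⟨⟨s.card, Nat.lt_succ_of_le hcard⟩, ?_, ?_⟩
  · intro j hj
    by_contra h; push_neg at h
    have hsub : s ⊆ Finset.Iio j := by
      intro j' hj'
      rw [hs, Finset.mem_filter] at hj'
      exact Finset.mem_Iio.mpr (hξ.lt_iff_lt.mp (lt_of_lt_of_le hj'.2 h))
    have := Finset.card_le_card hsub
    rw [Fin.card_Iio] at this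
    simp at hj
    omega
  · intro j hj
    by_contra h; push_neg at h
    have hlt : ξ j < x := lt_of_le_of_ne h (Ne.symm (hx j))
    have hsub : Finset.Iic j ⊆ s := by
      intro j' hj'
      rw [hs, Finset.mem_filter]
      exact ⟨Finset.mem_univ _, lt_of_le_of_lt (hξ.monotone (Finset.mem_Iic.mp hj')) hlt⟩
    have := Finset.card_le_card hsub
    rw [Fin.card_Iic] at this
    simp at hj
    omega

lemma piece_nonempty (k : ℕ) (ξ : Fin k → ℝ) (hξ : StrictMono ξ) (i : Fin (k + 1)) :
    ∃ y, y ∈ piece k ξ i := by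
  rcases Nat.eq_zero_or_pos k with rfl | hk
  · exact ⟨0, fun j _ => absurd j.isLt (by omega), fun j _ => absurd j.isLt (by omega)⟩
  rcases Nat.eq_zero_or_pos i.val with hi0 | hi0
  · refine ⟨ξ ⟨0, hk⟩ - 1, fun j hj => by omega, fun j _ => ?_⟩
    have : ξ ⟨0, hk⟩ ≤ ξ j := hξ.monotone (by simp [Fin.le_def])
    linarith
  rcases eq_or_lt_of_le (Nat.lt_succ_iff.mp i.isLt) with hik | hik
  · refine ⟨ξ ⟨k - 1, by omega⟩ + 1, fun j hj => ?_, fun j hj => ?_⟩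
    · have : ξ j ≤ ξ ⟨k - 1, by omega⟩ := hξ.monotone (by simp [Fin.le_def]; omega)
      linarith
    · exact absurd j.isLt (by omega)
  · refine ⟨(ξ ⟨i.val - 1, by omega⟩ + ξ ⟨i.val, hik⟩) / 2, fun j hj => ?_, fun j hj => ?_⟩
    · have h1 : ξ j ≤ ξ ⟨i.val - 1, by omega⟩ := hξ.monotone (by simp [Fin.le_def]; omega)
      have h2 : ξ ⟨i.val - 1, by omega⟩ < ξ ⟨i.val, hik⟩ := hξ (Fin.mk_lt_mk.mpr (by omega))
      linarith
    · have h1 : ξ ⟨i.val, hik⟩ ≤ ξ j := hξ.monotone (by simp [Fin.le_def]; omega)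
      have h2 : ξ ⟨i.val - 1, by omega⟩ < ξ ⟨i.val, hik⟩ := hξ (Fin.mk_lt_mk.mpr (by omega))
      linarith

lemma mu_growth (ℓμ : ℝ) (hℓμ : 0 < ℓμ) (μ : ℝ → ℝ) (c₂ : ℝ) (hc₂ : 0 < c₂)
    (k : ℕ) (ξ : Fin k → ℝ) (hξ : StrictMono ξ)
    (hA2ii : ∀ i : Fin (k + 1), ∀ x ∈ piece k ξ i, ∀ y ∈ piece k ξ i,
      |μ x - μ y| ≤ c₂ * (1 + |x| ^ ℓμ + |y| ^ ℓμ) * |x - y|) :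
    ∃ C : ℝ, 0 < C ∧ ∀ x : ℝ, |μ x| ≤ C * (1 + |x| ^ (ℓμ + 1)) := by
  classical
  choose y hy using piece_nonempty k ξ hξ
  obtain ⟨M, hM⟩ := Finite.exists_le
    (fun i : Fin (k+1) => |μ (y i)| + c₂ * (2 + 2 * |y i| + |y i| ^ ℓμ + |y i| ^ ℓμ * |y i|))
  obtain ⟨N, hN⟩ := Finite.exists_le (fun j : Fin k => |μ (ξ j)|)
  refine ⟨max (max M N) 1, lt_of_lt_of_le one_pos (le_max_right _ _), fun x => ?_⟩
  have hC1 : (1:ℝ) ≤ max (max M N) 1 := le_max_right _ _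
  have hP1 : (1:ℝ) ≤ 1 + |x| ^ (ℓμ + 1) := aux_one_le x _
  by_cases hx : ∀ j, x ≠ ξ j
  · obtain ⟨i, hxi⟩ := cover k ξ hξ x hx
    have key := hA2ii i x hxi (y i) (hy i)
    have hMi := hM i
    have hMC : M ≤ max (max M N) 1 := le_trans (le_max_left _ _) (le_max_left _ _)
    have habs : |x - y i| ≤ |x| + |y i| := abs_sub _ _
    have hxP : |x| ≤ 1 + |x| ^ (ℓμ + 1) := aux_abs_le x _ (by linarith)
    have hℓP : |x| ^ ℓμ ≤ 1 + |x| ^ (ℓμ + 1) := aux_rpow_le x _ _ hℓμ.le (by linarith)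
    have hmP : |x| ^ ℓμ * |x| ≤ 1 + |x| ^ (ℓμ + 1) := aux_mul_le x _ _ hℓμ.le le_rfl
    have h1 : |μ x| ≤ |μ (y i)| + |μ x - μ (y i)| := by
      have := abs_sub_abs_le_abs_sub (μ x) (μ (y i)); linarith [abs_nonneg (μ x - μ (y i))]
    have hy0 : (0:ℝ) ≤ |y i| := abs_nonneg _
    have hyℓ0 : (0:ℝ) ≤ |y i| ^ ℓμ := Real.rpow_nonneg hy0 _
    have hxℓ0 : (0:ℝ) ≤ |x| ^ ℓμ := Real.rpow_nonneg (abs_nonneg x) _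
    have hμy : (0:ℝ) ≤ |μ (y i)| := abs_nonneg _
    have h2 : c₂ * (1 + |x| ^ ℓμ + |y i| ^ ℓμ) * |x - y i|
        ≤ c₂ * (1 + |x| ^ ℓμ + |y i| ^ ℓμ) * (|x| + |y i|) := by
      apply mul_le_mul_of_nonneg_left habs
      positivity
    have h3 : (1 + |x| ^ ℓμ + |y i| ^ ℓμ) * (|x| + |y i|)
        ≤ (2 + 2 * |y i| + |y i| ^ ℓμ + |y i| ^ ℓμ * |y i|) * (1 + |x| ^ (ℓμ + 1)) := by
      nlinarith [mul_le_mul_of_nonneg_left hxP hyℓ0, mul_le_mul_of_nonneg_left hP1 hy0,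
        mul_le_mul_of_nonneg_left hP1 (mul_nonneg hyℓ0 hy0), abs_nonneg x]
    nlinarith [mul_le_mul_of_nonneg_left hP1 hμy,
      mul_le_mul_of_nonneg_right hMC (le_trans zero_le_one hP1),
      mul_le_mul_of_nonneg_right hMi (le_trans zero_le_one hP1),
      mul_le_mul_of_nonneg_left h3 hc₂.le]
  · push_neg at hx
    obtain ⟨j, rfl⟩ := hx
    have : |μ (ξ j)| ≤ max (max M N) 1 :=
      le_trans (hN j) (le_trans (le_max_right M N) (le_max_left _ _))
    nlinarith

/-- If `μ, σ` satisfy (A2)(ii) and (A3) with `ℓμ ∈ (0,∞)` and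
`ℓσ ∈ [0, ℓμ/2]`, then there is `c ∈ (0,∞)` such that for all `n ≥ 1` and all `x`,
`σ_n(x)² ≤ c·min(√n·(1+x²), σ(x)²)` and `|μ_n(x)| ≤ c·min(√n·(1+|x|), |μ(x)|)`. -/
theorem stmt_13 (ℓμ ℓσ : ℝ) (hℓμ : 0 < ℓμ) (hℓσ0 : 0 ≤ ℓσ) (hℓσ : ℓσ ≤ ℓμ / 2)
    (μ σ : ℝ → ℝ)
    (c₂ : ℝ) (hc₂ : 0 < c₂) (k : ℕ) (ξ : Fin k → ℝ) (hξ : StrictMono ξ)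
    (hA2ii : ∀ i : Fin (k + 1), ∀ x ∈ piece k ξ i, ∀ y ∈ piece k ξ i,
      |μ x - μ y| ≤ c₂ * (1 + |x| ^ ℓμ + |y| ^ ℓμ) * |x - y|)
    (c₃ : ℝ) (hc₃ : 0 < c₃)
    (hA3 : ∀ x y : ℝ, |σ x - σ y| ≤ c₃ * (1 + |x| ^ ℓσ + |y| ^ ℓσ) * |x - y|) :
    ∃ c : ℝ, 0 < c ∧ ∀ n : ℕ, 1 ≤ n → ∀ x : ℝ,
      (tame σ ℓμ n x) ^ 2 ≤ c * min (Real.sqrt (n : ℝ) * (1 + x ^ 2)) ((σ x) ^ 2) ∧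
      |tame μ ℓμ n x| ≤ c * min (Real.sqrt (n : ℝ) * (1 + |x|)) |μ x| := by
  obtain ⟨Cμ, hCμ0, hμg⟩ := mu_growth ℓμ hℓμ μ c₂ hc₂ k ξ hξ hA2ii
  set e : ℝ := ℓμ / 2 + 1 with he_def
  set Cσ : ℝ := 2 * (|σ 0| + 3 * c₃) ^ 2 with hCσ_def
  have hCσ0 : 0 < Cσ := by positivity
  have hσg : ∀ x : ℝ, (σ x) ^ 2 ≤ Cσ * (1 + |x| ^ (ℓμ + 2)) := by
    intro x
    have h0 := hA3 x 0
    rw [sub_zero] at h0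
    have h00 : |(0:ℝ)| ^ ℓσ ≤ 1 := by
      rw [abs_zero]; exact Real.rpow_le_one le_rfl zero_le_one hℓσ0
    have hxa : (0:ℝ) ≤ |x| := abs_nonneg x
    have hxℓσ : (0:ℝ) ≤ |x| ^ ℓσ := Real.rpow_nonneg hxa _
    have h1 : |σ x| ≤ |σ 0| + c₃ * (2 + |x| ^ ℓσ) * |x| := by
      have hs := abs_sub_abs_le_abs_sub (σ x) (σ 0)
      nlinarith [mul_le_mul_of_nonneg_right
        (show 1 + |x| ^ ℓσ + |(0:ℝ)| ^ ℓσ ≤ 2 + |x| ^ ℓσ by linarith) hxa]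
    have haP : |x| ≤ 1 + |x| ^ e := aux_abs_le x e (by rw [he_def]; linarith)
    have hmP : |x| ^ ℓσ * |x| ≤ 1 + |x| ^ e := aux_mul_le x e ℓσ hℓσ0 (by rw [he_def]; linarith)
    have h2 : |σ x| ≤ (|σ 0| + 3 * c₃) * (1 + |x| ^ e) := by
      have h1P : (1:ℝ) ≤ 1 + |x| ^ e := aux_one_le x e
      nlinarith [abs_nonneg (σ 0)]
    have hsq : (|x| ^ e) ^ 2 = |x| ^ (ℓμ + 2) := by
      rw [← Real.rpow_natCast (|x| ^ e) 2, ← Real.rpow_mul (abs_nonneg x)]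
      norm_num [he_def]
      ring_nf
    have h3 : (1 + |x| ^ e) ^ 2 ≤ 2 * (1 + |x| ^ (ℓμ + 2)) := by
      nlinarith [sq_nonneg (1 - |x| ^ e)]
    have h4 : (σ x) ^ 2 ≤ (|σ 0| + 3 * c₃) ^ 2 * (1 + |x| ^ e) ^ 2 := by
      rw [← sq_abs (σ x), ← mul_pow]
      exact pow_le_pow_left₀ (abs_nonneg _) h2 2
    calc (σ x) ^ 2 ≤ (|σ 0| + 3 * c₃) ^ 2 * (1 + |x| ^ e) ^ 2 := h4
      _ ≤ (|σ 0| + 3 * c₃) ^ 2 * (2 * (1 + |x| ^ (ℓμ + 2))) :=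
        mul_le_mul_of_nonneg_left h3 (sq_nonneg _)
      _ = Cσ * (1 + |x| ^ (ℓμ + 2)) := by rw [hCσ_def]; ring
  set c : ℝ := max (max Cμ Cσ) 1 with hc_def
  have hc1 : (1:ℝ) ≤ c := le_max_right _ _
  have hc0 : (0:ℝ) < c := lt_of_lt_of_le one_pos hc1
  have hCμc : Cμ ≤ c := le_trans (le_max_left _ _) (le_max_left _ _)
  have hCσc : Cσ ≤ c := le_trans (le_max_right _ _) (le_max_left _ _)
  refine ⟨c, hc0, fun n hn x => ?_⟩
  have hn1 : (1:ℝ) ≤ (n:ℝ) := by exact_mod_cast hn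
  have hs1 : (1:ℝ) ≤ Real.sqrt n := by
    rw [show (1:ℝ) = Real.sqrt 1 from (Real.sqrt_one).symm]
    exact Real.sqrt_le_sqrt hn1
  have hs0 : (0:ℝ) < Real.sqrt n := lt_of_lt_of_le one_pos hs1
  set D : ℝ := 1 + (1 / Real.sqrt n) * |x| ^ ℓμ with hD_def
  have hxℓ : (0:ℝ) ≤ |x| ^ ℓμ := Real.rpow_nonneg (abs_nonneg x) _
  have hD1 : 1 ≤ D := by
    rw [hD_def]
    have : (0:ℝ) ≤ (1 / Real.sqrt n) * |x| ^ ℓμ := by positivity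
    linarith
  have hD0 : (0:ℝ) < D := lt_of_lt_of_le one_pos hD1
  have hmul : ∀ T : ℝ, D * (Real.sqrt n * T) = Real.sqrt n * T + |x| ^ ℓμ * T := by
    intro T
    rw [hD_def]
    field_simp
  have hp1 : |x| ^ (ℓμ + 1) = |x| ^ ℓμ * |x| := rpow_succ_abs x ℓμ hℓμ.le
  have hp2 : |x| ^ (ℓμ + 2) = |x| ^ ℓμ * x ^ 2 := by
    rw [show ℓμ + 2 = (ℓμ + 1) + 1 by ring, rpow_succ_abs x (ℓμ + 1) (by linarith), hp1]
    rw [mul_assoc, ← sq_abs x]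
    ring
  have habs : (0:ℝ) ≤ |x| := abs_nonneg x
  have hx2 : (0:ℝ) ≤ x ^ 2 := sq_nonneg x
  have hkeyμ : 1 + |x| ^ (ℓμ + 1) ≤ D * (Real.sqrt n * (1 + |x|)) := by
    rw [hmul, hp1]
    have a1 : (1:ℝ) * 1 ≤ Real.sqrt n * (1 + |x|) :=
      mul_le_mul hs1 (by linarith) one_pos.le hs0.le
    have a2 : |x| ^ ℓμ * |x| ≤ |x| ^ ℓμ * (1 + |x|) :=
      mul_le_mul_of_nonneg_left (by linarith) hxℓ
    linarith
  have hkeyσ : 1 + |x| ^ (ℓμ + 2) ≤ D ^ 2 * (Real.sqrt n * (1 + x ^ 2)) := by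
    have h1 : 1 + |x| ^ (ℓμ + 2) ≤ D * (Real.sqrt n * (1 + x ^ 2)) := by
      rw [hmul, hp2]
      have a1 : (1:ℝ) * 1 ≤ Real.sqrt n * (1 + x ^ 2) :=
        mul_le_mul hs1 (by linarith) one_pos.le hs0.le
      have a2 : |x| ^ ℓμ * x ^ 2 ≤ |x| ^ ℓμ * (1 + x ^ 2) :=
        mul_le_mul_of_nonneg_left (by linarith) hxℓ
      linarith
    have hS : (0:ℝ) ≤ Real.sqrt n * (1 + x ^ 2) := by positivity
    have hDD : D ≤ D ^ 2 := by
      have := mul_le_mul_of_nonneg_left hD1 hD0.le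
      rw [mul_one] at this
      rw [sq]; exact this
    have h2 : D * (Real.sqrt n * (1 + x ^ 2)) ≤ D ^ 2 * (Real.sqrt n * (1 + x ^ 2)) :=
      mul_le_mul_of_nonneg_right hDD hS
    linarith
  have htσ : tame σ ℓμ n x = σ x / D := by rw [tame, hD_def]
  have htμ : tame μ ℓμ n x = μ x / D := by rw [tame, hD_def]
  constructor
  · rw [mul_min_of_nonneg _ _ hc0.le]
    refine le_min ?_ ?_
    · rw [htσ, div_pow, div_le_iff₀ (by positivity)]
      have hg := hσg x
      have h5 : Cσ * (1 + |x| ^ (ℓμ + 2)) ≤ Cσ * (D ^ 2 * (Real.sqrt n * (1 + x ^ 2))) :=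
        mul_le_mul_of_nonneg_left hkeyσ hCσ0.le
      have h6 : Cσ * (D ^ 2 * (Real.sqrt n * (1 + x ^ 2)))
          ≤ c * (D ^ 2 * (Real.sqrt n * (1 + x ^ 2))) :=
        mul_le_mul_of_nonneg_right hCσc (by positivity)
      calc (σ x) ^ 2 ≤ Cσ * (1 + |x| ^ (ℓμ + 2)) := hg
        _ ≤ Cσ * (D ^ 2 * (Real.sqrt n * (1 + x ^ 2))) := h5
        _ ≤ c * (D ^ 2 * (Real.sqrt n * (1 + x ^ 2))) := h6
        _ = c * (Real.sqrt n * (1 + x ^ 2)) * D ^ 2 := by ring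
    · rw [htσ, div_pow]
      have hD2 : (1:ℝ) ≤ D ^ 2 := by nlinarith
      have h1 : (σ x) ^ 2 / D ^ 2 ≤ (σ x) ^ 2 := div_le_self (sq_nonneg _) hD2
      have h2 : (σ x) ^ 2 ≤ c * (σ x) ^ 2 := le_mul_of_one_le_left (sq_nonneg _) hc1
      linarith
  · rw [mul_min_of_nonneg _ _ hc0.le]
    refine le_min ?_ ?_
    · rw [htμ, abs_div, abs_of_pos hD0, div_le_iff₀ hD0]
      have hg := hμg x
      have h5 : Cμ * (1 + |x| ^ (ℓμ + 1)) ≤ Cμ * (D * (Real.sqrt n * (1 + |x|))) :=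
        mul_le_mul_of_nonneg_left hkeyμ hCμ0.le
      have h6 : Cμ * (D * (Real.sqrt n * (1 + |x|))) ≤ c * (D * (Real.sqrt n * (1 + |x|))) :=
        mul_le_mul_of_nonneg_right hCμc (by positivity)
      calc |μ x| ≤ Cμ * (1 + |x| ^ (ℓμ + 1)) := hg
        _ ≤ Cμ * (D * (Real.sqrt n * (1 + |x|))) := h5
        _ ≤ c * (D * (Real.sqrt n * (1 + |x|))) := h6
        _ = c * (Real.sqrt n * (1 + |x|)) * D := by ring
    · rw [htμ, abs_div, abs_of_pos hD0]
      have h1 : |μ x| / D ≤ |μ x| := div_le_self (abs_nonneg _) hD1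
      have h2 : |μ x| ≤ c * |μ x| := le_mul_of_one_le_left (abs_nonneg _) hc1
      linarith
end
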